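/- arXiv:1303.0702 — 2 statements merged into one kernel-verified Lean document; each statement's English description precedes it below -/
import Mathlib

section
/- Let λ ∈ ℂ*, a ∈ ℂ, and let W be a nontrivial simple 𝔚-module in O_𝔚. Then the subspace L'(W, λ, a, 1) = ⊕_{n ∈ ℤ} ((d_{−1} − a − n)W) ⊗ t^n of L(W, λ, a, 1) is a Virasoro submodule, it is isomorphic to L(W, λ, a, 0), and the quotient satisfies L(W, λ, a, 1)/L'(W, λ, a, 1) ≅ N((Soc_𝔟 W)_(1), a). -/
/-- A representation of the Witt algebra `𝔚 = span{d_i : i ≥ -1}`, encoded by the family of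
operators `d i` (only the indices `i ≥ -1` are relevant) satisfying
`[d_m, d_n] = (n - m) d_{m+n}`. -/
structure WittRep (W : Type*) [AddCommGroup W] [Module ℂ W] where
  d : ℤ → W →ₗ[ℂ] W
  comm : ∀ m n : ℤ, -1 ≤ m → -1 ≤ n →
    d m ∘ₗ d n - d n ∘ₗ d m = (((n - m : ℤ) : ℂ)) • d (m + n)

namespace WittRep

variable {W : Type*} [AddCommGroup W] [Module ℂ W]

/-- Condition A : the module lies in the category `O_𝔚`. -/
def InO (ρ : WittRep W) : Prop :=
  ∀ v : W, ∃ n : ℕ, ∀ i : ℤ, (n : ℤ) ≤ i → ρ.d i v = 0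

/-- The module is trivial: the Lie algebra acts by zero. -/
def IsTrivial (ρ : WittRep W) : Prop := ∀ i : ℤ, -1 ≤ i → ρ.d i = 0

/-- A `𝔚`-submodule. -/
def Invariant (ρ : WittRep W) (U : Submodule ℂ W) : Prop :=
  ∀ i : ℤ, -1 ≤ i → ∀ u ∈ U, ρ.d i u ∈ U

/-- Simplicity of a `𝔚`-module. -/
def IsSimple (ρ : WittRep W) : Prop :=
  (∃ v : W, v ≠ 0) ∧ ∀ U : Submodule ℂ W, ρ.Invariant U → U = ⊥ ∨ U = ⊤

/-- A `𝔟`-submodule (`𝔟 = span{d_i : i ≥ 0}`). -/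
def BInvariant (ρ : WittRep W) (U : Submodule ℂ W) : Prop :=
  ∀ i : ℤ, 0 ≤ i → ∀ u ∈ U, ρ.d i u ∈ U

/-- The socle `Soc_𝔟(W)`: the sum of the minimal nonzero `𝔟`-submodules. -/
def Soc (ρ : WittRep W) : Submodule ℂ W :=
  sSup {U | ρ.BInvariant U ∧ U ≠ ⊥ ∧
    ∀ U' : Submodule ℂ W, ρ.BInvariant U' → U' ≠ ⊥ → U' ≤ U → U' = U}

/-- `w₀` is a highest weight vector of weight `b'`. -/
def IsHW (ρ : WittRep W) (w₀ : W) (b' : ℂ) : Prop :=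
  w₀ ≠ 0 ∧ ρ.d 0 w₀ = b' • w₀ ∧ ∀ i : ℤ, 1 ≤ i → ρ.d i w₀ = 0

/-- `w₀` generates the `𝔚`-module. -/
def Generates (ρ : WittRep W) (w₀ : W) : Prop :=
  ∀ U : Submodule ℂ W, ρ.Invariant U → w₀ ∈ U → U = ⊤

/-- The operator `e^{kt} d/dt = Σ_{i ≥ 0} (k^i/i!) d_{i-1}` (a finite sum on each vector of a
module in `O_𝔚`). -/
noncomputable def E (ρ : WittRep W) (k : ℤ) (w : W) : W :=
  ∑ᶠ i : ℕ, (((k : ℂ) ^ i) / (Nat.factorial i : ℂ)) • ρ.d ((i : ℤ) - 1) w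

/-- The action of `d_k` on `L(W, λ, a, b) = W ⊗ ℂ[t, t⁻¹]`, realized on `ℤ →₀ W`
(`w ⊗ t^j ↦ Finsupp.single j w`):
`d_k · (w ⊗ t^j) = ((λ^k e^{kt} − 1) d/dt + a + kb + j) w ⊗ t^{k+j}`. -/
noncomputable def Lact (ρ : WittRep W) (lam a b : ℂ) (k : ℤ) (f : ℤ →₀ W) : ℤ →₀ W :=
  f.sum fun j w => Finsupp.single (k + j)
    (lam ^ k • ρ.E k w - ρ.d (-1) w + (a + (k : ℂ) * b + (j : ℂ)) • w)

/-- The PBW map `ℕ →₀ ℂ → W`, `(k, c) ↦ c • d_{-1}^k w₀`. -/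
noncomputable def pbwMap (ρ : WittRep W) (w₀ : W) : (ℕ →₀ ℂ) →ₗ[ℂ] W :=
  Finsupp.lsum ℂ fun k : ℕ => ((ρ.d (-1)) ^ k) ∘ₗ LinearMap.toSpanSingleton ℂ W w₀

/-- `W` is the Verma `𝔚`-module with highest weight vector `w₀` of highest weight `b'`. -/
def IsVerma (ρ : WittRep W) (w₀ : W) (b' : ℂ) : Prop :=
  ρ.d 0 w₀ = b' • w₀ ∧ (∀ i : ℤ, 1 ≤ i → ρ.d i w₀ = 0) ∧
    Function.Bijective (ρ.pbwMap w₀)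

/-- `W^{(n)} = Σ_{i=0}^n d_{-1}^i (Soc_𝔟 W)`. -/
noncomputable def Wn (ρ : WittRep W) (n : ℕ) : Submodule ℂ W :=
  ⨆ i : Fin (n + 1), Submodule.map ((ρ.d (-1)) ^ (i : ℕ)) ρ.Soc

/-- `L₀(a, b') = span{d₁^i · (w₀ ⊗ t^{2j})} ⊆ L(W, -1, a, b' + 1)`. -/
noncomputable def Lzero (ρ : WittRep W) (a b' : ℂ) (w₀ : W) : Submodule ℂ (ℤ →₀ W) :=
  Submodule.span ℂ
    {g | ∃ (i : ℕ) (j : ℤ), g = (ρ.Lact (-1) a (b' + 1) 1)^[i] (Finsupp.single (2 * j) w₀)}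

/-- `L₁(a, b') = span{d₁^i · (w₀ ⊗ t^{2j+1})} ⊆ L(W, -1, a, b' + 1)`. -/
noncomputable def Lone (ρ : WittRep W) (a b' : ℂ) (w₀ : W) : Submodule ℂ (ℤ →₀ W) :=
  Submodule.span ℂ
    {g | ∃ (i : ℕ) (j : ℤ), g = (ρ.Lact (-1) a (b' + 1) 1)^[i] (Finsupp.single (2 * j + 1) w₀)}

variable (ρ : WittRep W)

lemma br (m n : ℤ) (hm : -1 ≤ m) (hn : -1 ≤ n) (w : W) :
    ρ.d m (ρ.d n w) = ρ.d n (ρ.d m w) + ((n - m : ℤ) : ℂ) • ρ.d (m + n) w := by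
  have h := congrArg (fun g : W →ₗ[ℂ] W => g w) (ρ.comm m n hm hn)
  simp only [LinearMap.sub_apply, LinearMap.smul_apply, LinearMap.coe_comp,
    Function.comp_apply, LinearMap.coe_smul] at h
  linear_combination (norm := module) h

/-- `d_i (D w) = D (d_i w) - (i+1) d_{i-1} w` for `i ≥ -1`. -/
lemma dDw (i : ℤ) (hi : -1 ≤ i) (w : W) :
    ρ.d i (ρ.d (-1) w) = ρ.d (-1) (ρ.d i w) - ((i + 1 : ℤ) : ℂ) • ρ.d (i - 1) w := by
  have h := ρ.br i (-1) hi le_rfl w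
  have h1 : (-1 - i : ℤ) = -(i + 1) := by ring
  have h2 : (i + -1 : ℤ) = i - 1 := by ring
  rw [h1, h2] at h
  push_cast at h ⊢
  linear_combination (norm := module) h

/-- local order predicate : all `d_i`, `i > r`, kill `v`. -/
def P (ρ : WittRep W) (v : W) (r : ℕ) : Prop := ∀ i : ℤ, (r : ℤ) < i → ρ.d i v = 0

lemma exP (hO : ρ.InO) (v : W) : ∃ r : ℕ, ρ.P v r := by
  obtain ⟨n, hn⟩ := hO v
  exact ⟨n, fun i hi => hn i (le_of_lt hi)⟩

open scoped Classical in
/-- F1 : `d_{-1} - c` is injective. -/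
lemma ker_shift (hO : ρ.InO) (hnt : ¬ ρ.IsTrivial) (hs : ρ.IsSimple)
    (c : ℂ) (v : W) (h : ρ.d (-1) v = c • v) : v = 0 := by
  by_contra hv
  -- local order of v
  set s := Nat.find (ρ.exP hO v) with hs_def
  have hPs : ρ.P v s := Nat.find_spec (ρ.exP hO v)
  -- key computation: for i ≥ 0 with d_i v = 0 and d_{i-1} relevant
  have key : ∀ i : ℤ, 0 ≤ i → ρ.d i v = 0 → ((i + 1 : ℤ) : ℂ) • ρ.d (i - 1) v = 0 := by
    intro i hi hiv
    have h0 := ρ.dDw i (by linarith) v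
    rw [h, map_smul, hiv] at h0
    simpa using h0.symm
  -- s must be 0
  have hs0 : s = 0 := by
    by_contra hs0
    have hspos : 1 ≤ s := Nat.one_le_iff_ne_zero.mpr hs0
    have hd : ρ.d ((s : ℤ)) v = 0 := by
      have h1 : ρ.d ((s : ℤ) + 1) v = 0 := hPs _ (by linarith)
      have h2 := key ((s : ℤ) + 1) (by positivity) h1
      have h3 : (((s : ℤ) + 1 + 1 : ℤ) : ℂ) ≠ 0 := Int.cast_ne_zero.mpr (by omega)
      have h4 : ((s : ℤ) + 1 - 1) = (s : ℤ) := by ring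
      rw [h4] at h2
      exact (smul_eq_zero.mp h2).resolve_left h3
    have : ρ.P v (s - 1) := by
      intro i hi
      rcases eq_or_lt_of_le (by omega : (s : ℤ) ≤ i) with h' | h'
      · rwa [← h']
      · exact hPs i h'
    have hle : Nat.find (ρ.exP hO v) ≤ s - 1 := Nat.find_le this
    omega
  -- now d_i v = 0 for all i ≥ 1, and we get d_0 v = 0
  have hge1 : ∀ i : ℤ, 1 ≤ i → ρ.d i v = 0 := fun i hi => hPs i (by omega)
  have hd0 : ρ.d 0 v = 0 := by
    have h2 := key 1 (by norm_num) (hge1 1 le_rfl)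
    have h4 : ((1 + 1 : ℤ) : ℂ) ≠ 0 := Int.cast_ne_zero.mpr (by omega)
    have h5 := (smul_eq_zero.mp h2).resolve_left h4
    simpa using h5
  -- span of v is invariant
  have hinv : ρ.Invariant (Submodule.span ℂ {v}) := by
    intro i hi u hu
    obtain ⟨t, rfl⟩ := Submodule.mem_span_singleton.mp hu
    rcases eq_or_lt_of_le hi with h' | h'
    · rw [map_smul, ← h', h]
      exact Submodule.smul_mem _ _ (Submodule.smul_mem _ _ (Submodule.mem_span_singleton_self v))
    · have hi0 : 0 ≤ i := by omega
      rcases eq_or_lt_of_le hi0 with h0 | h0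
      · rw [map_smul, ← h0, hd0, smul_zero]; exact Submodule.zero_mem _
      · rw [map_smul, hge1 i (by omega), smul_zero]; exact Submodule.zero_mem _
  have htop : Submodule.span ℂ {v} = ⊤ := by
    rcases hs.2 _ hinv with hbot | htop
    · exact absurd hbot (by
        intro hb
        have : v ∈ (⊥ : Submodule ℂ W) := hb ▸ Submodule.mem_span_singleton_self v
        exact hv (by simpa using this))
    · exact htop
  -- c = 0 from [d_{-1}, d_0] = d_{-1}
  have hc : c = 0 := by
    have h0 := ρ.br (-1) 0 le_rfl (by norm_num) v
    rw [hd0, map_zero, h, map_smul, hd0, smul_zero] at h0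
    norm_num at h0
    have hcv : c • v = 0 := by rw [← h]; exact h0.symm
    rcases smul_eq_zero.mp hcv with h1 | h1
    · exact h1
    · exact absurd h1 hv
  -- everything acts by zero
  apply hnt
  intro i hi
  ext u
  have hu : u ∈ Submodule.span ℂ {v} := htop ▸ Submodule.mem_top
  obtain ⟨t, rfl⟩ := Submodule.mem_span_singleton.mp hu
  rcases eq_or_lt_of_le hi with h' | h'
  · simp [map_smul, ← h', h, hc]
  · have hi0 : 0 ≤ i := by omega
    rcases eq_or_lt_of_le hi0 with h0 | h0
    · simp [map_smul, ← h0, hd0]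
    · simp [map_smul, hge1 i (by omega)]

open scoped Classical in
/-- Lemma T : no nonzero vector is killed by all of 𝔟. -/
lemma no_binv (hO : ρ.InO) (hnt : ¬ ρ.IsTrivial) (hs : ρ.IsSimple)
    (w : W) (hw : ∀ i : ℤ, 0 ≤ i → ρ.d i w = 0) : w = 0 := by
  by_contra hv
  have hDinj : ∀ x : W, ρ.d (-1) x = 0 → x = 0 := fun x hx =>
    ρ.ker_shift hO hnt hs 0 x (by simpa using hx)
  have hpow : ∀ m : ℕ, (ρ.d (-1) ^ (m + 1)) w = ρ.d (-1) ((ρ.d (-1) ^ m) w) := fun m => by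
    rw [pow_succ']; exact Module.End.mul_apply _ _ _
  have hpow_ne : ∀ m : ℕ, (ρ.d (-1) ^ m) w ≠ 0 := by
    intro m; induction m with
    | zero => simpa using hv
    | succ n ih => rw [hpow n]; exact fun hc => ih (hDinj _ hc)
  have heig : ∀ m : ℕ, ρ.d 0 ((ρ.d (-1) ^ m) w) = (-(m : ℂ)) • ((ρ.d (-1) ^ m) w) := by
    intro m; induction m with
    | zero => simpa using hw 0 le_rfl
    | succ n ih =>
      rw [hpow n]
      have h0 := ρ.dDw 0 (by norm_num) ((ρ.d (-1) ^ n) w)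
      rw [ih, map_smul] at h0
      rw [h0]
      push_cast
      module
  set N : Submodule ℂ W := Submodule.span ℂ (Set.range fun m : ℕ => (ρ.d (-1) ^ (m + 1)) w)
    with hN_def
  have hgen : ∀ m : ℕ, (ρ.d (-1) ^ (m + 1)) w ∈ N := fun m => Submodule.subset_span ⟨m, rfl⟩
  have hDN : ∀ x ∈ N, ρ.d (-1) x ∈ N := by
    intro x hx
    induction hx using Submodule.span_induction with
    | mem x hx =>
      obtain ⟨m, rfl⟩ := hx
      show ρ.d (-1) ((ρ.d (-1) ^ (m + 1)) w) ∈ N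
      rw [← hpow (m + 1)]
      exact hgen (m + 1)
    | zero => simpa using N.zero_mem
    | add x y _ _ hx hy => rw [map_add]; exact N.add_mem hx hy
    | smul a x _ hx => rw [map_smul]; exact N.smul_mem a hx
  have hkey : ∀ m : ℕ, ∀ i : ℤ, -1 ≤ i → ρ.d i ((ρ.d (-1) ^ (m + 1)) w) ∈ N := by
    intro m; induction m with
    | zero =>
      intro i hi
      rw [hpow 0]
      rw [ρ.dDw i hi]
      simp only [pow_zero, Module.End.one_apply]
      rcases eq_or_lt_of_le hi with h' | h'
      · rw [← h']
        have hc : (((-1 : ℤ) + 1 : ℤ) : ℂ) = 0 := by norm_num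
        rw [hc, zero_smul, sub_zero]
        exact hDN _ (by simpa [hpow 0] using hgen 0)
      · have hi0 : 0 ≤ i := by omega
        rcases eq_or_lt_of_le hi0 with h0 | h0
        · rw [← h0, hw 0 le_rfl, map_zero]
          have h1 : ((0 : ℤ) - 1) = (-1 : ℤ) := by norm_num
          rw [h1]
          refine N.sub_mem (N.zero_mem) (N.smul_mem _ ?_)
          simpa [hpow 0] using hgen 0
        · rw [hw i (by omega), map_zero, hw (i - 1) (by omega), smul_zero]
          simpa using N.zero_mem
    | succ n ih =>
      intro i hi
      rw [hpow (n + 1)]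
      rw [ρ.dDw i hi]
      refine N.sub_mem (hDN _ (ih i hi)) ?_
      rcases eq_or_lt_of_le hi with h' | h'
      · rw [← h']; norm_num
      · exact N.smul_mem _ (ih (i - 1) (by omega))
  have hinv : ρ.Invariant N := by
    intro i hi u hu
    induction hu using Submodule.span_induction with
    | mem x hx => obtain ⟨m, rfl⟩ := hx; exact hkey m i hi
    | zero => simpa using N.zero_mem
    | add x y _ _ hx hy => rw [map_add]; exact N.add_mem hx hy
    | smul a x _ hx => rw [map_smul]; exact N.smul_mem a hx
  have hNtop : N = ⊤ := by
    rcases hs.2 N hinv with hbot | htop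
    · exfalso
      have h1 : (ρ.d (-1) ^ 1) w ∈ N := hgen 0
      rw [hbot] at h1
      exact hpow_ne 1 (by simpa using h1)
    · exact htop
  -- independence of the eigenvectors
  have hli : LinearIndependent ℂ (fun m : ℕ => (ρ.d (-1) ^ m) w) := by
    apply Module.End.eigenvectors_linearIndependent' (ρ.d 0) (fun m : ℕ => (-(m : ℂ)))
    · intro m n hmn
      simp only [neg_inj, Nat.cast_inj] at hmn
      exact_mod_cast hmn
    · intro m
      constructor
      · rw [Module.End.mem_eigenspace_iff]; exact heig m
      · exact hpow_ne m
  have hmem : w ∈ N := hNtop ▸ Submodule.mem_top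
  have hnot : w ∉ N := by
    have h1 := hli.notMem_span_image (s := {n : ℕ | n ≠ 0}) (x := 0) (by simp)
    intro hcon
    apply h1
    simp only [pow_zero, Module.End.one_apply] at *
    refine Submodule.span_mono ?_ hcon
    rintro _ ⟨m, rfl⟩
    exact ⟨m + 1, by simp, rfl⟩
  exact hnot hmem

section Structure

variable (hO : ρ.InO) (hnt : ¬ ρ.IsTrivial) (hs : ρ.IsSimple)

lemma exQ (hO : ρ.InO) (hs : ρ.IsSimple) : ∃ r : ℕ, ∃ v : W, v ≠ 0 ∧ ρ.P v r := by
  obtain ⟨v, hv⟩ := hs.1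
  obtain ⟨r, hr⟩ := ρ.exP hO v
  exact ⟨r, v, hv, hr⟩

open scoped Classical in
/-- the minimal order over all nonzero vectors. -/
noncomputable def rr (hO : ρ.InO) (hs : ρ.IsSimple) : ℕ := Nat.find (ρ.exQ hO hs)

/-- `V = {v | d_i v = 0 for all i > rr}`, the "top" of `W`. -/
noncomputable def VV (hO : ρ.InO) (hs : ρ.IsSimple) : Submodule ℂ W where
  carrier := {v | ρ.P v (ρ.rr hO hs)}
  add_mem' := fun ha hb => fun i hi => by
    rw [map_add, ha i hi, hb i hi, add_zero]
  zero_mem' := fun i _ => map_zero _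
  smul_mem' := fun c v hv => fun i hi => by rw [map_smul, hv i hi, smul_zero]

lemma mem_VV {v : W} : v ∈ ρ.VV hO hs ↔ ρ.P v (ρ.rr hO hs) := Iff.rfl

open scoped Classical in
lemma Vne : ∃ v ∈ ρ.VV hO hs, v ≠ 0 := by
  obtain ⟨v, hv, hP⟩ := Nat.find_spec (ρ.exQ hO hs)
  exact ⟨v, hP, hv⟩

lemma Vb {i : ℤ} (hi : 0 ≤ i) {v : W} (hv : v ∈ ρ.VV hO hs) : ρ.d i v ∈ ρ.VV hO hs := by
  intro j hj
  have h := ρ.br j i (by omega) (by omega) v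
  rw [hv j hj, map_zero, hv (j + i) (by omega), smul_zero, add_zero] at h
  exact h

open scoped Classical in
lemma Vd (hnt : ¬ ρ.IsTrivial) (v : W) (hv : v ∈ ρ.VV hO hs) (hv0 : v ≠ 0) : ρ.d (ρ.rr hO hs) v ≠ 0 := by
  intro hcon
  rcases Nat.eq_zero_or_pos (ρ.rr hO hs) with h0 | hpos
  · refine hv0 (ρ.no_binv hO hnt hs v ?_)
    intro i hi
    rcases eq_or_lt_of_le hi with h' | h'
    · rw [← h']
      rw [h0] at hcon
      exact_mod_cast hcon
    · exact hv i (by rw [h0]; exact_mod_cast h')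
  · have hP : ρ.P v (ρ.rr hO hs - 1) := by
      intro i hi
      rcases eq_or_lt_of_le (show ((ρ.rr hO hs : ℤ)) ≤ i by omega) with h' | h'
      · rwa [← h']
      · exact hv i h'
    have hle : Nat.find (ρ.exQ hO hs) ≤ ρ.rr hO hs - 1 := Nat.find_le ⟨v, hv0, hP⟩
    have : ρ.rr hO hs = Nat.find (ρ.exQ hO hs) := rfl
    omega

lemma Dpow_succ (m : ℕ) (x : W) :
    (ρ.d (-1) ^ (m + 1)) x = ρ.d (-1) ((ρ.d (-1) ^ m) x) := by
  rw [pow_succ']; exact Module.End.mul_apply _ _ _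

/-- order of `D^m v` is at most `rr + m`. -/
lemma ordD (m : ℕ) (v : W) (hv : v ∈ ρ.VV hO hs) :
    ∀ i : ℤ, (ρ.rr hO hs : ℤ) + m < i → ρ.d i ((ρ.d (-1) ^ m) v) = 0 := by
  induction m with
  | zero => intro i hi; simpa using hv i (by push_cast at hi; omega)
  | succ n ih =>
    intro i hi
    rw [ρ.Dpow_succ n v, ρ.dDw i (by push_cast at hi; omega)]
    rw [ih i (by push_cast at hi ⊢; omega), map_zero,
      ih (i - 1) (by push_cast at hi ⊢; omega), smul_zero, sub_zero]

/-- `d_{rr+m} D^m v = cc • d_rr v` with `cc ≠ 0`. -/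
lemma ordD2 (m : ℕ) : ∃ cc : ℂ, cc ≠ 0 ∧ ∀ v ∈ ρ.VV hO hs,
    ρ.d ((ρ.rr hO hs : ℤ) + m) ((ρ.d (-1) ^ m) v) = cc • ρ.d (ρ.rr hO hs) v := by
  induction m with
  | zero => exact ⟨1, one_ne_zero, fun v _ => by simp⟩
  | succ n ih =>
    obtain ⟨cc, hcc, hcv⟩ := ih
    refine ⟨-(((ρ.rr hO hs : ℤ) + n + 1 + 1 : ℤ) : ℂ) * cc, ?_, ?_⟩
    · exact mul_ne_zero (neg_ne_zero.mpr (Int.cast_ne_zero.mpr (by omega))) hcc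
    · intro v hv
      have hstep := ρ.dDw ((ρ.rr hO hs : ℤ) + n + 1) (by omega) ((ρ.d (-1) ^ n) v)
      rw [ρ.ordD hO hs n v hv ((ρ.rr hO hs : ℤ) + n + 1) (by omega), map_zero] at hstep
      have h1 : ((ρ.rr hO hs : ℤ) + n + 1 - 1) = ((ρ.rr hO hs : ℤ) + n) := by ring
      rw [h1, hcv v hv] at hstep
      have h2 : ((ρ.rr hO hs : ℤ) + ((n + 1 : ℕ) : ℤ)) = ((ρ.rr hO hs : ℤ) + n + 1) := by
        push_cast; ring
      rw [h2, ρ.Dpow_succ n v, hstep]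
      module


noncomputable def Psi (U : Submodule ℂ W) : (ℕ →₀ ↥U) →ₗ[ℂ] W :=
  Finsupp.lsum ℂ fun m : ℕ => (ρ.d (-1) ^ m) ∘ₗ U.subtype

lemma Psi_single (U : Submodule ℂ W) (m : ℕ) (x : ↥U) :
    ρ.Psi U (Finsupp.single m x) = (ρ.d (-1) ^ m) ↑x := by
  simp [Psi]

lemma Psi_apply (U : Submodule ℂ W) (f : ℕ →₀ ↥U) :
    ρ.Psi U f = f.sum fun m x => (ρ.d (-1) ^ m) ↑x := by
  rw [Psi, Finsupp.lsum_apply]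
  rfl

lemma DPsi (U : Submodule ℂ W) (f : ℕ →₀ ↥U) :
    ρ.d (-1) (ρ.Psi U f) = ρ.Psi U (f.mapDomain (· + 1)) := by
  rw [ρ.Psi_apply, ρ.Psi_apply, map_finsuppSum,
    Finsupp.sum_mapDomain_index (by simp) (by simp)]
  refine Finsupp.sum_congr fun m _ => ?_
  rw [← ρ.Dpow_succ m]

lemma Psi_gen_mem (U : Submodule ℂ W) (hU : ρ.BInvariant U) (m : ℕ) (x : ↥U) :
    ∀ i : ℤ, -1 ≤ i → ρ.d i ((ρ.d (-1) ^ m) ↑x) ∈ LinearMap.range (ρ.Psi U) := by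
  induction m with
  | zero =>
    intro i hi
    simp only [pow_zero, Module.End.one_apply]
    rcases eq_or_lt_of_le hi with h' | h'
    · refine ⟨Finsupp.single 1 x, ?_⟩
      rw [ρ.Psi_single, ← h', pow_one]
    · refine ⟨Finsupp.single 0 ⟨ρ.d i ↑x, hU i (by omega) _ x.2⟩, ?_⟩
      rw [ρ.Psi_single, pow_zero, Module.End.one_apply]
  | succ n ih =>
    intro i hi
    rw [ρ.Dpow_succ n, ρ.dDw i hi]
    have hD : ∀ y ∈ LinearMap.range (ρ.Psi U), ρ.d (-1) y ∈ LinearMap.range (ρ.Psi U) := by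
      rintro y ⟨g, rfl⟩
      exact ⟨g.mapDomain (· + 1), (ρ.DPsi U g).symm⟩
    refine Submodule.sub_mem _ (hD _ (ih i hi)) ?_
    rcases eq_or_lt_of_le hi with h' | h'
    · rw [← h']
      norm_num
    · exact Submodule.smul_mem _ _ (ih (i - 1) (by omega))

lemma Psi_range_inv (U : Submodule ℂ W) (hU : ρ.BInvariant U) :
    ρ.Invariant (LinearMap.range (ρ.Psi U)) := by
  rintro i hi y ⟨f, rfl⟩
  rw [ρ.Psi_apply, map_finsuppSum]
  exact Submodule.sum_mem _ fun m _ => ρ.Psi_gen_mem U hU m (f m) i hi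

lemma Psi_surj (hs : ρ.IsSimple) (U : Submodule ℂ W) (hU : ρ.BInvariant U) (hU0 : U ≠ ⊥) :
    LinearMap.range (ρ.Psi U) = ⊤ := by
  rcases hs.2 _ (ρ.Psi_range_inv U hU) with hbot | htop
  · exfalso
    obtain ⟨u, hu, hu0⟩ := Submodule.exists_mem_ne_zero_of_ne_bot hU0
    have : u ∈ LinearMap.range (ρ.Psi U) := ⟨Finsupp.single 0 ⟨u, hu⟩, by simp [ρ.Psi_single]⟩
    rw [hbot] at this
    exact hu0 (by simpa using this)
  · exact htop

open scoped Classical in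
lemma Phi_inj (hO : ρ.InO) (hnt : ¬ ρ.IsTrivial) (hs : ρ.IsSimple) :
    Function.Injective (ρ.Psi (ρ.VV hO hs)) := by
  rw [← LinearMap.ker_eq_bot]
  rw [LinearMap.ker_eq_bot']
  intro f hf
  by_contra hf0
  have hne : f.support.Nonempty := Finsupp.support_nonempty_iff.mpr hf0
  set M := f.support.max' hne with hM
  have happ := congrArg (ρ.d ((ρ.rr hO hs : ℤ) + M)) hf
  rw [ρ.Psi_apply, map_finsuppSum, map_zero] at happ
  rw [Finsupp.sum] at happ
  obtain ⟨cc, hcc, hcv⟩ := ρ.ordD2 hO hs M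
  rw [Finset.sum_eq_single M (fun m hm hmne => by
      exact ρ.ordD hO hs m _ (f m).2 _ (by
        have : m ≤ M := Finset.le_max' _ _ hm
        have : m < M := lt_of_le_of_ne this hmne
        omega))
    (fun hM' => absurd (f.support.max'_mem hne) (hM ▸ hM'))] at happ
  rw [hcv _ (f M).2] at happ
  have h0 : ρ.d (ρ.rr hO hs : ℤ) ↑(f M) = 0 := by
    rcases smul_eq_zero.mp happ with h | h
    · exact absurd h hcc
    · exact h
  have hfM : (f M : W) ≠ 0 := by
    simpa using (Finsupp.mem_support_iff.mp (f.support.max'_mem hne))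
  exact ρ.Vd hO hs hnt _ (f M).2 hfM h0

lemma Vmin (hO : ρ.InO) (hnt : ¬ ρ.IsTrivial) (hs : ρ.IsSimple)
    (U : Submodule ℂ W) (hUb : ρ.BInvariant U) (hU0 : U ≠ ⊥) (hUV : U ≤ ρ.VV hO hs) :
    U = ρ.VV hO hs := by
  refine le_antisymm hUV ?_
  intro v hv
  have hsurj : LinearMap.range (ρ.Psi U) = ⊤ := ρ.Psi_surj hs U hUb hU0
  have hmem : v ∈ LinearMap.range (ρ.Psi U) := hsurj ▸ Submodule.mem_top
  obtain ⟨g, hg⟩ := hmem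
  set ι : (ℕ →₀ ↥U) →ₗ[ℂ] (ℕ →₀ ↥(ρ.VV hO hs)) :=
    Finsupp.mapRange.linearMap (Submodule.inclusion hUV) with hι
  have hcomp : ρ.Psi (ρ.VV hO hs) (ι g) = ρ.Psi U g := by
    rw [ρ.Psi_apply, ρ.Psi_apply, hι, Finsupp.mapRange.linearMap_apply]
    rw [Finsupp.sum_mapRange_index (by simp)]
    rfl
  have heq : ι g = Finsupp.single 0 ⟨v, hv⟩ := by
    apply ρ.Phi_inj hO hnt hs
    rw [hcomp, hg, ρ.Psi_single]
    simp
  have := congrArg (fun h => (h 0 : W)) heq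
  simp only [hι, Finsupp.mapRange.linearMap_apply, Finsupp.mapRange_apply,
    Finsupp.single_eq_same] at this
  rw [← this]
  exact (g 0).2

/-- The filtration `F m = V + D V + ... + D^m V`. -/
noncomputable def FF (hO : ρ.InO) (hs : ρ.IsSimple) (m : ℕ) : Submodule ℂ W :=
  ⨆ t : Fin (m + 1), LinearMap.range ((ρ.d (-1) ^ (t : ℕ)) ∘ₗ (ρ.VV hO hs).subtype)

lemma FF_piece_le (hO : ρ.InO) (hs : ρ.IsSimple) {t m : ℕ} (h : t ≤ m) :
    LinearMap.range ((ρ.d (-1) ^ t) ∘ₗ (ρ.VV hO hs).subtype) ≤ ρ.FF hO hs m :=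
  le_iSup (fun s : Fin (m + 1) => LinearMap.range ((ρ.d (-1) ^ (s : ℕ)) ∘ₗ (ρ.VV hO hs).subtype))
    ⟨t, by omega⟩

lemma FF_mono (hO : ρ.InO) (hs : ρ.IsSimple) {m : ℕ} : ρ.FF hO hs m ≤ ρ.FF hO hs (m + 1) :=
  iSup_le fun t => ρ.FF_piece_le hO hs (by omega : (t : ℕ) ≤ m + 1)

lemma V_le_FF (hO : ρ.InO) (hs : ρ.IsSimple) (m : ℕ) : ρ.VV hO hs ≤ ρ.FF hO hs m := by
  intro x hx
  exact ρ.FF_piece_le hO hs (Nat.zero_le m) ⟨⟨x, hx⟩, by simp⟩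

lemma FF_D (hO : ρ.InO) (hs : ρ.IsSimple) {m : ℕ} {x : W} (hx : x ∈ ρ.FF hO hs m) :
    ρ.d (-1) x ∈ ρ.FF hO hs (m + 1) := by
  refine Submodule.iSup_induction _ (motive := fun y => ρ.d (-1) y ∈ ρ.FF hO hs (m + 1)) hx
    ?_ ?_ ?_
  · rintro t y ⟨v, rfl⟩
    refine ρ.FF_piece_le hO hs (show (t : ℕ) + 1 ≤ m + 1 by omega) ⟨v, ?_⟩
    simp only [LinearMap.coe_comp, Function.comp_apply]
    rw [ρ.Dpow_succ]
  · show ρ.d (-1) (0 : W) ∈ ρ.FF hO hs (m + 1)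
    rw [map_zero]; exact Submodule.zero_mem _
  · intro x y hx hy; rw [map_add]; exact Submodule.add_mem _ hx hy

lemma FF_gen_b (hO : ρ.InO) (hs : ρ.IsSimple) (t : ℕ) (v : ↥(ρ.VV hO hs)) :
    ∀ i : ℤ, 0 ≤ i → ρ.d i ((ρ.d (-1) ^ t) ↑v) ∈ ρ.FF hO hs t := by
  induction t with
  | zero =>
    intro i hi
    simp only [pow_zero, Module.End.one_apply]
    exact ρ.V_le_FF hO hs 0 (ρ.Vb hO hs hi v.2)
  | succ n ih =>
    intro i hi
    rw [ρ.Dpow_succ n, ρ.dDw i (by omega)]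
    refine Submodule.sub_mem _ (ρ.FF_D hO hs (ih i hi)) ?_
    rcases eq_or_lt_of_le hi with h0 | h0
    · rw [← h0]
      have h1 : ((0 : ℤ) - 1) = (-1 : ℤ) := by norm_num
      rw [h1, ← ρ.Dpow_succ n]
      exact Submodule.smul_mem _ _ (ρ.FF_piece_le hO hs (le_refl (n + 1)) ⟨v, rfl⟩)
    · exact Submodule.smul_mem _ _ (ρ.FF_mono hO hs (ih (i - 1) (by omega)))

lemma FF_b (hO : ρ.InO) (hs : ρ.IsSimple) (m : ℕ) : ∀ i : ℤ, 0 ≤ i →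
    ∀ x ∈ ρ.FF hO hs m, ρ.d i x ∈ ρ.FF hO hs m := by
  intro i hi x hx
  refine Submodule.iSup_induction _ (motive := fun y => ρ.d i y ∈ ρ.FF hO hs m) hx ?_ ?_ ?_
  · rintro t y ⟨v, rfl⟩
    have hgen := ρ.FF_gen_b hO hs (t : ℕ) v i hi
    exact (iSup_le fun s : Fin ((t : ℕ) + 1) =>
      ρ.FF_piece_le hO hs (by omega : (s : ℕ) ≤ m)) hgen
  · show ρ.d i (0 : W) ∈ ρ.FF hO hs m
    rw [map_zero]; exact Submodule.zero_mem _
  · intro x y hx hy; rw [map_add]; exact Submodule.add_mem _ hx hy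

lemma FF_kill (hO : ρ.InO) (hs : ρ.IsSimple) (m : ℕ) {x : W} (hx : x ∈ ρ.FF hO hs m) :
    ∀ i : ℤ, (ρ.rr hO hs : ℤ) + m < i → ρ.d i x = 0 := by
  refine Submodule.iSup_induction _
    (motive := fun y => ∀ i : ℤ, (ρ.rr hO hs : ℤ) + m < i → ρ.d i y = 0) hx ?_ ?_ ?_
  · rintro t y ⟨v, rfl⟩ i hi
    refine ρ.ordD hO hs (t : ℕ) ↑v v.2 i ?_
    have : (t : ℕ) ≤ m := by omega
    push_cast at hi ⊢
    omega
  · show ∀ i : ℤ, (ρ.rr hO hs : ℤ) + m < i → ρ.d i (0 : W) = 0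
    intro i _; rw [map_zero]
  · intro x y hx hy i hi; rw [map_add, hx i hi, hy i hi, add_zero]

lemma FF_exhaust (hO : ρ.InO) (hs : ρ.IsSimple) (u : W) :
    ∃ m : ℕ, u ∈ ρ.FF hO hs m := by
  have hsurj : LinearMap.range (ρ.Psi (ρ.VV hO hs)) = ⊤ := by
    refine ρ.Psi_surj hs _ (fun i hi x hx => ρ.Vb hO hs hi hx) ?_
    obtain ⟨v, hv, hv0⟩ := ρ.Vne hO hs
    exact Submodule.ne_bot_iff _ |>.mpr ⟨v, hv, hv0⟩
  obtain ⟨f, rfl⟩ := hsurj ▸ Submodule.mem_top (x := u)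
  refine ⟨f.support.sup id, ?_⟩
  rw [ρ.Psi_apply, Finsupp.sum]
  refine Submodule.sum_mem _ fun m hm => ?_
  exact ρ.FF_piece_le hO hs (Finset.le_sup (f := id) hm) ⟨f m, rfl⟩

lemma FF_succ_decomp (hO : ρ.InO) (hs : ρ.IsSimple) (m : ℕ) {u : W}
    (hu : u ∈ ρ.FF hO hs (m + 1)) :
    ∃ y ∈ ρ.FF hO hs m, ∃ x : ↥(ρ.VV hO hs), u = y + (ρ.d (-1) ^ (m + 1)) ↑x := by
  have hsup : ρ.FF hO hs (m + 1) ≤ ρ.FF hO hs m ⊔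
      LinearMap.range ((ρ.d (-1) ^ (m + 1)) ∘ₗ (ρ.VV hO hs).subtype) := by
    refine iSup_le fun t => ?_
    rcases Nat.lt_or_ge (t : ℕ) (m + 1) with h | h
    · exact le_sup_of_le_left (ρ.FF_piece_le hO hs (by omega))
    · have ht : (t : ℕ) = m + 1 := by omega
      rw [ht]
      exact le_sup_right
  obtain ⟨y, hy, z, hz, rfl⟩ := Submodule.mem_sup.mp (hsup hu)
  obtain ⟨x, rfl⟩ := hz
  exact ⟨y, hy, x, rfl⟩

open scoped Classical in
lemma Soc_eq (hO : ρ.InO) (hnt : ¬ ρ.IsTrivial) (hs : ρ.IsSimple) :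
    ρ.Soc = ρ.VV hO hs := by
  have hVb : ρ.BInvariant (ρ.VV hO hs) := fun i hi x hx => ρ.Vb hO hs hi hx
  have hV0 : ρ.VV hO hs ≠ ⊥ := by
    obtain ⟨v, hv, hv0⟩ := ρ.Vne hO hs
    exact Submodule.ne_bot_iff _ |>.mpr ⟨v, hv, hv0⟩
  refine le_antisymm ?_ (le_sSup ⟨hVb, hV0, fun U' hb h0 hle => ρ.Vmin hO hnt hs U' hb h0 hle⟩)
  refine sSup_le fun U hU => ?_
  obtain ⟨hUb, hU0, hUmin⟩ := hU
  have hex : ∃ m : ℕ, U ⊓ ρ.FF hO hs m ≠ ⊥ := by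
    obtain ⟨u, hu, hu0⟩ := Submodule.exists_mem_ne_zero_of_ne_bot hU0
    obtain ⟨m, hm⟩ := ρ.FF_exhaust hO hs u
    exact ⟨m, Submodule.ne_bot_iff _ |>.mpr ⟨u, ⟨hu, hm⟩, hu0⟩⟩
  have hspec : U ⊓ ρ.FF hO hs (Nat.find hex) ≠ ⊥ := Nat.find_spec hex
  have hUF : U ≤ ρ.FF hO hs (Nat.find hex) := by
    have heq := hUmin (U ⊓ ρ.FF hO hs (Nat.find hex))
      (fun i hi x hx => ⟨hUb i hi x hx.1, ρ.FF_b hO hs (Nat.find hex) i hi x hx.2⟩)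
      hspec inf_le_left
    exact le_of_eq_of_le heq.symm inf_le_right
  rcases Nat.eq_zero_or_pos (Nat.find hex) with h0 | hpos
  · rw [h0] at hUF
    refine le_trans hUF ?_
    refine iSup_le fun t => ?_
    have ht : (t : ℕ) = 0 := by omega
    rw [ht]
    rintro x ⟨v, rfl⟩
    simpa using v.2
  · exfalso
    obtain ⟨m, hm⟩ := Nat.exists_eq_add_of_lt hpos
    rw [zero_add] at hm
    have hbot : U ⊓ ρ.FF hO hs m = ⊥ := by
      by_contra hcon
      have hle : Nat.find hex ≤ m := Nat.find_le hcon
      omega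
    obtain ⟨u, hu, hu0⟩ := Submodule.exists_mem_ne_zero_of_ne_bot hU0
    obtain ⟨y, hy, x, hux⟩ := ρ.FF_succ_decomp hO hs m (hm ▸ hUF hu)
    have hx0 : (x : W) ≠ 0 := by
      intro hc
      apply hu0
      have hmm : u ∈ U ⊓ ρ.FF hO hs m := ⟨hu, by
        rw [hux, hc, map_zero, add_zero]; exact hy⟩
      rw [hbot] at hmm
      simpa using hmm
    obtain ⟨cc, hcc, hcv⟩ := ρ.ordD2 hO hs (m + 1)
    have hdu : ρ.d ((ρ.rr hO hs : ℤ) + ((m + 1 : ℕ) : ℤ)) u = cc • ρ.d (ρ.rr hO hs) ↑x := by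
      rw [hux, map_add, ρ.FF_kill hO hs m hy _ (by push_cast; omega), zero_add]
      exact hcv ↑x x.2
    have hmem1 : ρ.d ((ρ.rr hO hs : ℤ) + ((m + 1 : ℕ) : ℤ)) u ∈ U :=
      hUb _ (by positivity) u hu
    have hmem2 : ρ.d ((ρ.rr hO hs : ℤ) + ((m + 1 : ℕ) : ℤ)) u ∈ ρ.FF hO hs m := by
      rw [hdu]
      exact Submodule.smul_mem _ _ (ρ.V_le_FF hO hs m (ρ.Vb hO hs (by positivity) x.2))
    have hmm : ρ.d ((ρ.rr hO hs : ℤ) + ((m + 1 : ℕ) : ℤ)) u ∈ U ⊓ ρ.FF hO hs m :=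
      ⟨hmem1, hmem2⟩
    rw [hbot] at hmm
    have hz : cc • ρ.d (ρ.rr hO hs) (x : W) = 0 := by rw [← hdu]; simpa using hmm
    rcases smul_eq_zero.mp hz with h | h
    · exact hcc h
    · exact ρ.Vd hO hs hnt _ x.2 hx0 h

noncomputable def Phie (hO : ρ.InO) (hnt : ¬ ρ.IsTrivial) (hs : ρ.IsSimple) :
    (ℕ →₀ ↥(ρ.VV hO hs)) ≃ₗ[ℂ] W :=
  LinearEquiv.ofBijective (ρ.Psi (ρ.VV hO hs))
    ⟨ρ.Phi_inj hO hnt hs, by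
      rw [← LinearMap.range_eq_top]
      refine ρ.Psi_surj hs _ (fun i hi x hx => ρ.Vb hO hs hi hx) ?_
      obtain ⟨v, hv, hv0⟩ := ρ.Vne hO hs
      exact Submodule.ne_bot_iff _ |>.mpr ⟨v, hv, hv0⟩⟩

noncomputable def qV (hO : ρ.InO) (hnt : ¬ ρ.IsTrivial) (hs : ρ.IsSimple) (c : ℂ) :
    W →ₗ[ℂ] ↥(ρ.VV hO hs) :=
  (Finsupp.lsum ℂ fun m : ℕ =>
    ((c ^ m) • (LinearMap.id : ↥(ρ.VV hO hs) →ₗ[ℂ] ↥(ρ.VV hO hs)))) ∘ₗ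
    (ρ.Phie hO hnt hs).symm.toLinearMap

lemma qV_Psi (hO : ρ.InO) (hnt : ¬ ρ.IsTrivial) (hs : ρ.IsSimple) (c : ℂ)
    (f : ℕ →₀ ↥(ρ.VV hO hs)) :
    ρ.qV hO hnt hs c (ρ.Psi (ρ.VV hO hs) f) = f.sum fun m x => c ^ m • x := by
  have h1 : (ρ.Phie hO hnt hs).symm (ρ.Psi (ρ.VV hO hs) f) = f := by
    have : ρ.Psi (ρ.VV hO hs) f = ρ.Phie hO hnt hs f := rfl
    rw [this, LinearEquiv.symm_apply_apply]
  show (Finsupp.lsum ℂ _) ((ρ.Phie hO hnt hs).symm (ρ.Psi (ρ.VV hO hs) f)) = _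
  rw [h1, Finsupp.lsum_apply]
  rfl

lemma qV_on_V (hO : ρ.InO) (hnt : ¬ ρ.IsTrivial) (hs : ρ.IsSimple) (c : ℂ)
    (x : W) (hx : x ∈ ρ.VV hO hs) : ρ.qV hO hnt hs c x = ⟨x, hx⟩ := by
  have h0 : x = ρ.Psi (ρ.VV hO hs) (Finsupp.single 0 ⟨x, hx⟩) := by
    rw [ρ.Psi_single]; simp
  apply Subtype.ext
  conv_lhs => rw [h0]
  rw [ρ.qV_Psi hO hnt hs c, Finsupp.sum_single_index (by simp)]
  simp

lemma qV_D (hO : ρ.InO) (hnt : ¬ ρ.IsTrivial) (hs : ρ.IsSimple) (c : ℂ) (w : W) :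
    ρ.qV hO hnt hs c (ρ.d (-1) w) = c • ρ.qV hO hnt hs c w := by
  obtain ⟨f, rfl⟩ : ∃ f, ρ.Psi (ρ.VV hO hs) f = w :=
    ⟨(ρ.Phie hO hnt hs).symm w, by
      show ρ.Phie hO hnt hs _ = w
      rw [LinearEquiv.apply_symm_apply]⟩
  rw [ρ.DPsi, ρ.qV_Psi hO hnt hs c, ρ.qV_Psi hO hnt hs c,
    Finsupp.sum_mapDomain_index (by simp) (by intro b m1 m2; rw [smul_add]),
    Finsupp.smul_sum]
  refine Finsupp.sum_congr fun m _ => ?_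
  rw [pow_succ']
  rw [mul_smul]

lemma pow_mem_range (c : ℂ) (m : ℕ) (x : W) :
    (ρ.d (-1) ^ m) x - c ^ m • x ∈
      LinearMap.range (ρ.d (-1) - c • (LinearMap.id : W →ₗ[ℂ] W)) := by
  induction m with
  | zero => simp
  | succ n ih =>
    have hkey : (ρ.d (-1) ^ (n + 1)) x - c ^ (n + 1) • x =
        (ρ.d (-1) - c • (LinearMap.id : W →ₗ[ℂ] W)) ((ρ.d (-1) ^ n) x) +
          c • ((ρ.d (-1) ^ n) x - c ^ n • x) := by
      rw [ρ.Dpow_succ n x]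
      simp only [LinearMap.sub_apply, LinearMap.smul_apply, LinearMap.id_apply, pow_succ]
      rw [smul_sub]
      module
    rw [hkey]
    exact Submodule.add_mem _ ⟨(ρ.d (-1) ^ n) x, rfl⟩ (Submodule.smul_mem _ _ ih)

lemma qV_sub (hO : ρ.InO) (hnt : ¬ ρ.IsTrivial) (hs : ρ.IsSimple) (c : ℂ) (w : W) :
    w - ↑(ρ.qV hO hnt hs c w) ∈
      LinearMap.range (ρ.d (-1) - c • (LinearMap.id : W →ₗ[ℂ] W)) := by
  obtain ⟨f, rfl⟩ : ∃ f, ρ.Psi (ρ.VV hO hs) f = w :=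
    ⟨(ρ.Phie hO hnt hs).symm w, by
      show ρ.Phie hO hnt hs _ = w
      rw [LinearEquiv.apply_symm_apply]⟩
  rw [ρ.qV_Psi hO hnt hs c, ρ.Psi_apply, Finsupp.sum, Finsupp.sum]
  have hcoe : ((↑(∑ m ∈ f.support, c ^ m • f m) : W)) =
      ∑ m ∈ f.support, c ^ m • (↑(f m) : W) := by
    simp
  rw [hcoe, ← Finset.sum_sub_distrib]
  exact Submodule.sum_mem _ fun m _ => ρ.pow_mem_range c m ↑(f m)

/-- The master projection lemma : canonical projections `q c : W → Soc` with
`ker q c = ran(D - c)` and `q c` restricting to the identity on `Soc`. -/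
lemma exists_q (hO : ρ.InO) (hnt : ¬ ρ.IsTrivial) (hs : ρ.IsSimple) :
    ∃ q : ℂ → (W →ₗ[ℂ] ↥ρ.Soc),
      (∀ c : ℂ, ∀ s : ↥ρ.Soc, q c ↑s = s) ∧
      (∀ c : ℂ, ∀ w : W, q c (ρ.d (-1) w) = c • q c w) ∧
      (∀ c : ℂ, ∀ w : W, w - ↑(q c w) ∈
        LinearMap.range (ρ.d (-1) - c • (LinearMap.id : W →ₗ[ℂ] W))) := by
  refine ⟨fun c => (LinearEquiv.ofEq _ _ (ρ.Soc_eq hO hnt hs).symm).toLinearMap ∘ₗ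
    ρ.qV hO hnt hs c, ?_, ?_, ?_⟩
  · intro c s
    have hx : (s : W) ∈ ρ.VV hO hs := (ρ.Soc_eq hO hnt hs) ▸ s.2
    show LinearEquiv.ofEq _ _ (ρ.Soc_eq hO hnt hs).symm (ρ.qV hO hnt hs c ↑s) = s
    rw [ρ.qV_on_V hO hnt hs c ↑s hx]
    exact Subtype.ext (by rw [LinearEquiv.coe_ofEq_apply])
  · intro c w
    show LinearEquiv.ofEq _ _ (ρ.Soc_eq hO hnt hs).symm (ρ.qV hO hnt hs c (ρ.d (-1) w)) =
      c • LinearEquiv.ofEq _ _ (ρ.Soc_eq hO hnt hs).symm (ρ.qV hO hnt hs c w)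
    rw [ρ.qV_D hO hnt hs c w, map_smul]
  · intro c w
    show w - ↑(LinearEquiv.ofEq _ _ (ρ.Soc_eq hO hnt hs).symm (ρ.qV hO hnt hs c w)) ∈ _
    rw [LinearEquiv.coe_ofEq_apply]
    exact ρ.qV_sub hO hnt hs c w


end Structure

section Emach

lemma E_zero (k : ℤ) : ρ.E k 0 = 0 := by
  unfold E
  simp

lemma E_eq_sum (k : ℤ) (w : W) (N : ℕ) (hN : ∀ i : ℤ, (N : ℤ) ≤ i → ρ.d i w = 0) :
    ρ.E k w = ∑ i ∈ Finset.range (N + 1),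
      (((k : ℂ) ^ i) / (Nat.factorial i : ℂ)) • ρ.d ((i : ℤ) - 1) w := by
  apply finsum_eq_sum_of_support_subset
  intro i hi
  simp only [Function.mem_support] at hi
  simp only [Finset.coe_range, Set.mem_Iio]
  by_contra hmem
  push_neg at hmem
  apply hi
  rw [hN ((i : ℤ) - 1) (by push_cast; omega), smul_zero]

lemma E_sub_smul (hO : ρ.InO) (k : ℤ) (c : ℂ) (w : W) :
    ρ.E k (ρ.d (-1) w - c • w) = ρ.E k (ρ.d (-1) w) - c • ρ.E k w := by
  obtain ⟨N0, hN0⟩ := hO w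
  have hw : ∀ i : ℤ, ((N0 + 1 : ℕ) : ℤ) ≤ i → ρ.d i w = 0 := fun i hi =>
    hN0 i (by push_cast at hi ⊢; omega)
  have hDw : ∀ i : ℤ, ((N0 + 1 : ℕ) : ℤ) ≤ i → ρ.d i (ρ.d (-1) w) = 0 := by
    intro i hi
    push_cast at hi
    rw [ρ.dDw i (by omega), hN0 i (by omega), map_zero,
      hN0 (i - 1) (by omega), smul_zero, sub_zero]
  have hsub : ∀ i : ℤ, ((N0 + 1 : ℕ) : ℤ) ≤ i → ρ.d i (ρ.d (-1) w - c • w) = 0 := by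
    intro i hi
    rw [map_sub, map_smul, hDw i hi, hw i hi, smul_zero, sub_zero]
  rw [ρ.E_eq_sum k _ (N0 + 1) hsub, ρ.E_eq_sum k _ (N0 + 1) hDw,
    ρ.E_eq_sum k w (N0 + 1) hw, Finset.smul_sum, ← Finset.sum_sub_distrib]
  refine Finset.sum_congr rfl fun i _ => ?_
  rw [map_sub, map_smul, smul_sub, smul_smul, smul_smul, mul_comm c]

lemma E_shift (hO : ρ.InO) (k : ℤ) (w : W) :
    ρ.E k (ρ.d (-1) w) = ρ.d (-1) (ρ.E k w) - (k : ℂ) • ρ.E k w := by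
  obtain ⟨N0, hN0⟩ := hO w
  set N := N0 + 1 with hNdef
  have hw : ∀ i : ℤ, ((N : ℕ) : ℤ) ≤ i → ρ.d i w = 0 := fun i hi =>
    hN0 i (by push_cast at hi ⊢; omega)
  have hDw : ∀ i : ℤ, ((N : ℕ) : ℤ) ≤ i → ρ.d i (ρ.d (-1) w) = 0 := by
    intro i hi
    push_cast at hi
    rw [ρ.dDw i (by omega), hN0 i (by omega), map_zero,
      hN0 (i - 1) (by omega), smul_zero, sub_zero]
  rw [ρ.E_eq_sum k _ N hDw, ρ.E_eq_sum k w N hw, map_sum, Finset.smul_sum]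
  have hterm : ∀ i ∈ Finset.range (N + 1),
      (((k : ℂ) ^ i) / (Nat.factorial i : ℂ)) • ρ.d ((i : ℤ) - 1) (ρ.d (-1) w)
      = (((k : ℂ) ^ i) / (Nat.factorial i : ℂ)) • ρ.d (-1) (ρ.d ((i : ℤ) - 1) w)
        - ((i : ℂ) * ((k : ℂ) ^ i) / (Nat.factorial i : ℂ)) • ρ.d ((i : ℤ) - 2) w := by
    intro i _
    rw [ρ.dDw ((i : ℤ) - 1) (by omega)]
    have hc : ((((i : ℤ) - 1) + 1 : ℤ) : ℂ) = (i : ℂ) := by push_cast; ring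
    have h2 : ((i : ℤ) - 1 - 1) = ((i : ℤ) - 2) := by ring
    rw [smul_sub, hc, h2, smul_smul]
    congr 2
    ring
  rw [Finset.sum_congr rfl hterm, Finset.sum_sub_distrib]
  congr 1
  · refine Finset.sum_congr rfl fun i _ => by rw [map_smul]
  · rw [Finset.sum_range_succ'
      (fun i => ((i : ℂ) * ((k : ℂ) ^ i) / (Nat.factorial i : ℂ)) • ρ.d ((i : ℤ) - 2) w) N]
    rw [Finset.sum_range_succ
      (fun i => (k : ℂ) • ((((k : ℂ) ^ i) / (Nat.factorial i : ℂ)) • ρ.d ((i : ℤ) - 1) w)) N]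
    have hz1 : (((0 : ℕ) : ℂ) * ((k : ℂ) ^ (0 : ℕ)) / (Nat.factorial 0 : ℂ)) •
        ρ.d (((0 : ℕ) : ℤ) - 2) w = 0 := by simp
    have hz2 : (k : ℂ) • ((((k : ℂ) ^ N) / (Nat.factorial N : ℂ)) • ρ.d ((N : ℤ) - 1) w) = 0 := by
      rw [hN0 ((N : ℤ) - 1) (by push_cast; omega), smul_zero, smul_zero]
    rw [hz1, hz2, add_zero, add_zero]
    refine Finset.sum_congr rfl fun j _ => ?_
    have hidx : (((j + 1 : ℕ) : ℤ) - 2) = ((j : ℤ) - 1) := by push_cast; ring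
    rw [hidx, smul_smul]
    congr 1
    have h1 : ((Nat.factorial (j + 1) : ℕ) : ℂ) = ((j : ℂ) + 1) * (Nat.factorial j : ℂ) := by
      rw [Nat.factorial_succ]; push_cast; ring
    have h2 : ((j : ℂ) + 1) ≠ 0 := by
      have := Nat.cast_add_one_ne_zero (R := ℂ) j
      simpa using this
    have h3 : (Nat.factorial j : ℂ) ≠ 0 := Nat.cast_ne_zero.mpr (Nat.factorial_ne_zero j)
    rw [h1]
    push_cast
    field_simp
    ring

/-- The central identity relating `E_k`, `D` and the shifts. -/
lemma key_id (hO : ρ.InO) (k : ℤ) (lam c : ℂ) (w : W) :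
    lam ^ k • ρ.E k ((ρ.d (-1) - c • (LinearMap.id : W →ₗ[ℂ] W)) w)
      - ρ.d (-1) ((ρ.d (-1) - c • (LinearMap.id : W →ₗ[ℂ] W)) w)
      + (c + (k : ℂ)) • ((ρ.d (-1) - c • (LinearMap.id : W →ₗ[ℂ] W)) w)
    = (ρ.d (-1) - (c + (k : ℂ)) • (LinearMap.id : W →ₗ[ℂ] W))
        (lam ^ k • ρ.E k w - ρ.d (-1) w + c • w) := by
  have h1 : (ρ.d (-1) - c • (LinearMap.id : W →ₗ[ℂ] W)) w = ρ.d (-1) w - c • w := by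
    simp
  rw [h1, ρ.E_sub_smul hO k c w, ρ.E_shift hO k w]
  simp only [LinearMap.sub_apply, LinearMap.smul_apply, LinearMap.id_apply, map_sub, map_add,
    map_smul, smul_sub, smul_add]
  module

/-- `E_k w = D w + Σ_{i<N} (k^{i+1}/(i+1)!) d_i w` once `N` bounds `w`. -/
lemma E_split (k : ℤ) (w : W) (N : ℕ) (hN : ∀ i : ℤ, (N : ℤ) ≤ i → ρ.d i w = 0) :
    ρ.E k w = ρ.d (-1) w + ∑ i ∈ Finset.range N,
      (((k : ℂ) ^ (i + 1)) / (Nat.factorial (i + 1) : ℂ)) • ρ.d (i : ℤ) w := by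
  rw [ρ.E_eq_sum k w N hN, Finset.sum_range_succ'
    (fun i => (((k : ℂ) ^ i) / (Nat.factorial i : ℂ)) • ρ.d ((i : ℤ) - 1) w) N]
  have h0 : (((k : ℂ) ^ (0 : ℕ)) / (Nat.factorial 0 : ℂ)) • ρ.d (((0 : ℕ) : ℤ) - 1) w
      = ρ.d (-1) w := by
    norm_num
  rw [h0, add_comm]
  congr 1
  refine Finset.sum_congr rfl fun i _ => ?_
  have hidx : (((i + 1 : ℕ) : ℤ) - 1) = (i : ℤ) := by push_cast; ring
  rw [hidx]

lemma E_add (hO : ρ.InO) (k : ℤ) (x y : W) : ρ.E k (x + y) = ρ.E k x + ρ.E k y := by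
  obtain ⟨Nx, hNx⟩ := hO x
  obtain ⟨Ny, hNy⟩ := hO y
  have hx : ∀ i : ℤ, ((max Nx Ny : ℕ) : ℤ) ≤ i → ρ.d i x = 0 := fun i hi =>
    hNx i (by push_cast at hi ⊢; omega)
  have hy : ∀ i : ℤ, ((max Nx Ny : ℕ) : ℤ) ≤ i → ρ.d i y = 0 := fun i hi =>
    hNy i (by push_cast at hi ⊢; omega)
  have hxy : ∀ i : ℤ, ((max Nx Ny : ℕ) : ℤ) ≤ i → ρ.d i (x + y) = 0 := fun i hi => by
    rw [map_add, hx i hi, hy i hi, add_zero]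
  rw [ρ.E_eq_sum k x _ hx, ρ.E_eq_sum k y _ hy, ρ.E_eq_sum k (x + y) _ hxy,
    ← Finset.sum_add_distrib]
  exact Finset.sum_congr rfl fun i _ => by rw [map_add, smul_add]

end Emach

end WittRep

/-- A representation of the Lie algebra `𝔟 = span{d_i : i ≥ 0}`. -/
structure BRep (B : Type*) [AddCommGroup B] [Module ℂ B] where
  d : ℕ → B →ₗ[ℂ] B
  comm : ∀ m n : ℕ, d m ∘ₗ d n - d n ∘ₗ d m = (((n : ℂ) - (m : ℂ))) • d (m + n)

namespace BRep

variable {B : Type*} [AddCommGroup B] [Module ℂ B]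

/-- Condition A : the module lies in the category `O_𝔟`. -/
def InO (ρ : BRep B) : Prop := ∀ v : B, ∃ n : ℕ, ∀ i : ℕ, n ≤ i → ρ.d i v = 0

def IsTrivial (ρ : BRep B) : Prop := ∀ i : ℕ, ρ.d i = 0

def IsSimple (ρ : BRep B) : Prop :=
  (∃ v : B, v ≠ 0) ∧
    ∀ U : Submodule ℂ B, (∀ i : ℕ, ∀ u ∈ U, ρ.d i u ∈ U) → U = ⊥ ∨ U = ⊤

/-- The set of `r ∈ ℤ≥0` such that `d_{r+i} v = 0` for all `i ≥ 1`;
`ord_𝔟(v)` is its least element. -/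
def ordSet (ρ : BRep B) (v : B) : Set ℕ := {r : ℕ | ∀ i : ℕ, r + 1 ≤ i → ρ.d i v = 0}

/-- The action of `d_m` on the Virasoro module `N(B_(c), a) = B ⊗ ℂ[t, t⁻¹]`, realized on
`ℤ →₀ B`:  `d_m · (w ⊗ t^j) = (Σ_{i≥1} (m^i/i!) d_{i-1} + mc + a + j) w ⊗ t^{m+j}`
(`c` is the twist of the `d₀`-action; `c = 0` gives `N(B, a)`). -/
noncomputable def Nact (ρ : BRep B) (a c : ℂ) (m : ℤ) (f : ℤ →₀ B) : ℤ →₀ B :=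
  f.sum fun j w => Finsupp.single (m + j)
    ((∑ᶠ i : ℕ, (((m : ℂ) ^ (i + 1)) / (Nat.factorial (i + 1) : ℂ)) • ρ.d i w) +
      ((m : ℂ) * c + a + (j : ℂ)) • w)

end BRep

/-- For a family `U : ℤ → Submodule ℂ W`, the subspace `⊕_j U j ⊗ t^j` of `W ⊗ ℂ[t,t⁻¹]`. -/
def gradedSub {W : Type*} [AddCommGroup W] [Module ℂ W] (U : ℤ → Submodule ℂ W) :
    Submodule ℂ (ℤ →₀ W) where
  carrier := {f | ∀ j, f j ∈ U j}
  add_mem' := fun hf hg j => by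
    simpa only [Finsupp.add_apply] using (U j).add_mem (hf j) (hg j)
  zero_mem' := fun j => by simp
  smul_mem' := fun c f hf j => by
    simpa only [Finsupp.smul_apply] using (U j).smul_mem c (hf j)

/-- A submodule invariant under a (ℤ-indexed) family of operators. -/
def ActInvariant {V : Type*} [AddCommGroup V] [Module ℂ V] (act : ℤ → V → V)
    (M : Submodule ℂ V) : Prop :=
  ∀ k : ℤ, ∀ u ∈ M, act k u ∈ M

/-- Simplicity of the module given by a family of operators (the central element acts by zero). -/
def ActSimple {V : Type*} [AddCommGroup V] [Module ℂ V] (act : ℤ → V → V) : Prop :=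
  (∃ v : V, v ≠ 0) ∧ ∀ M : Submodule ℂ V, ActInvariant act M → M = ⊥ ∨ M = ⊤

/-- A representation of the Virasoro algebra. -/
structure VirasoroRep (V : Type*) [AddCommGroup V] [Module ℂ V] where
  d : ℤ → V →ₗ[ℂ] V
  z : V →ₗ[ℂ] V
  comm : ∀ m n : ℤ, d m ∘ₗ d n - d n ∘ₗ d m =
    (((n - m : ℤ) : ℂ)) • d (m + n) +
      (if m + n = 0 then (((n : ℂ) ^ 3 - (n : ℂ)) / 12) else 0) • z
  comm_z : ∀ m : ℤ, d m ∘ₗ z = z ∘ₗ d m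

/-- `L'(W, λ, a, 1) = ⊕_{n ∈ ℤ} ((d_{-1} - a - n) W) ⊗ t^n`. -/
noncomputable def WittRep.Lprime {W : Type*} [AddCommGroup W] [Module ℂ W]
    (ρ : WittRep W) (a : ℂ) : Submodule ℂ (ℤ →₀ W) :=
  gradedSub fun n : ℤ =>
    LinearMap.range (ρ.d (-1) - (a + (n : ℂ)) • (LinearMap.id : W →ₗ[ℂ] W))


section EvalLemmas

variable {M N' : Type*} [AddCommGroup M] [Module ℂ M] [AddCommGroup N'] [Module ℂ N']

lemma sum_single_shift_apply (k : ℤ) (G : ℤ → M → N') (hG : ∀ j, G j 0 = 0)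
    (f : ℤ →₀ M) (n : ℤ) :
    (f.sum fun j w => Finsupp.single (k + j) (G j w)) n = G (n - k) (f (n - k)) := by
  classical
  rw [Finsupp.sum_apply]
  rw [Finsupp.sum_eq_single (n - k) (fun j _ hj => ?_) (fun h => ?_)]
  · rw [show k + (n - k) = n by ring, Finsupp.single_eq_same]
  · exact Finsupp.single_eq_of_ne (by omega)
  · rw [hG, Finsupp.single_zero, Finsupp.coe_zero, Pi.zero_apply]

lemma sum_single_apply' (G : ℤ → M → N') (hG : ∀ j, G j 0 = 0) (f : ℤ →₀ M) (n : ℤ) :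
    (f.sum fun j w => Finsupp.single j (G j w)) n = G n (f n) := by
  classical
  rw [Finsupp.sum_apply]
  rw [Finsupp.sum_eq_single n (fun j _ hj => ?_) (fun h => ?_)]
  · rw [Finsupp.single_eq_same]
  · exact Finsupp.single_eq_of_ne' hj
  · rw [hG, Finsupp.single_zero, Finsupp.coe_zero, Pi.zero_apply]

end EvalLemmas

lemma WittRep.Lact_apply {W : Type*} [AddCommGroup W] [Module ℂ W] (ρ : WittRep W)
    (lam a b : ℂ) (k : ℤ) (f : ℤ →₀ W) (n : ℤ) :
    ρ.Lact lam a b k f n = lam ^ k • ρ.E k (f (n - k)) - ρ.d (-1) (f (n - k))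
      + (a + (k : ℂ) * b + ((n - k : ℤ) : ℂ)) • f (n - k) := by
  unfold Lact
  exact sum_single_shift_apply k
    (fun j w => lam ^ k • ρ.E k w - ρ.d (-1) w + (a + (k : ℂ) * b + (j : ℂ)) • w)
    (fun j => by
      show lam ^ k • ρ.E k 0 - ρ.d (-1) 0 + (a + (k : ℂ) * b + (j : ℂ)) • (0 : W) = 0
      rw [ρ.E_zero, map_zero, smul_zero, smul_zero, sub_zero, add_zero]) f n

lemma BRep.Nact_apply {B : Type*} [AddCommGroup B] [Module ℂ B] (σ : BRep B)
    (a c : ℂ) (m : ℤ) (f : ℤ →₀ B) (n : ℤ) :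
    σ.Nact a c m f n =
      (∑ᶠ i : ℕ, (((m : ℂ) ^ (i + 1)) / (Nat.factorial (i + 1) : ℂ)) • σ.d i (f (n - m))) +
        ((m : ℂ) * c + a + ((n - m : ℤ) : ℂ)) • f (n - m) := by
  unfold Nact
  exact sum_single_shift_apply m
    (fun j w => (∑ᶠ i : ℕ, (((m : ℂ) ^ (i + 1)) / (Nat.factorial (i + 1) : ℂ)) • σ.d i w) +
      ((m : ℂ) * c + a + (j : ℂ)) • w)
    (fun j => by
      show (∑ᶠ i : ℕ, (((m : ℂ) ^ (i + 1)) / (Nat.factorial (i + 1) : ℂ)) • σ.d i 0) +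
        ((m : ℂ) * c + a + (j : ℂ)) • (0 : B) = 0
      simp) f n

theorem stmt8 {W : Type*} [AddCommGroup W] [Module ℂ W] (ρ : WittRep W)
    (hO : ρ.InO) (hnt : ¬ ρ.IsTrivial) (hs : ρ.IsSimple)
    (lam a : ℂ) (hlam : lam ≠ 0)
    (σ : BRep ↥ρ.Soc)
    (hσ : ∀ (i : ℕ) (w : ↥ρ.Soc), (↑(σ.d i w) : W) = ρ.d (i : ℤ) (↑w : W)) :
    (∀ k : ℤ, ∀ f ∈ ρ.Lprime a, ρ.Lact lam a 1 k f ∈ ρ.Lprime a) ∧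
    (∃ τ : (ℤ →₀ W) ≃ₗ[ℂ] ↥(ρ.Lprime a),
      ∀ (k : ℤ) (f : ℤ →₀ W),
        (↑(τ (ρ.Lact lam a 0 k f)) : ℤ →₀ W) = ρ.Lact lam a 1 k ↑(τ f)) ∧
    (∃ π : (ℤ →₀ W) →ₗ[ℂ] (ℤ →₀ ↥ρ.Soc),
      Function.Surjective π ∧ LinearMap.ker π = ρ.Lprime a ∧
      ∀ (k : ℤ) (f : ℤ →₀ W), π (ρ.Lact lam a 1 k f) = σ.Nact a 1 k (π f)) := by
  classical
  obtain ⟨q, hq1, hq2, hq3⟩ := ρ.exists_q hO hnt hs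
  have hqr : ∀ (c : ℂ) (u : W), q c ((ρ.d (-1) - c • (LinearMap.id : W →ₗ[ℂ] W)) u) = 0 := by
    intro c u
    have h1 : (ρ.d (-1) - c • (LinearMap.id : W →ₗ[ℂ] W)) u = ρ.d (-1) u - c • u := by simp
    rw [h1, map_sub, map_smul, hq2 c u, sub_self]
  have hker : ∀ (c : ℂ) (w : W),
      q c w = 0 ↔ w ∈ LinearMap.range (ρ.d (-1) - c • (LinearMap.id : W →ₗ[ℂ] W)) := by
    intro c w
    constructor
    · intro h
      have h3 := hq3 c w
      rwa [h, Submodule.coe_zero, sub_zero] at h3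
    · rintro ⟨u, rfl⟩
      exact hqr c u
  have hLmem : ∀ g : ℤ →₀ W, g ∈ ρ.Lprime a ↔ ∀ n : ℤ,
      g n ∈ LinearMap.range (ρ.d (-1) - (a + (n : ℂ)) • (LinearMap.id : W →ₗ[ℂ] W)) :=
    fun g => Iff.rfl
  refine ⟨?_, ?_, ?_⟩
  -- PART 1 : L' is a submodule
  · intro k f hf
    rw [hLmem]
    intro n
    rw [ρ.Lact_apply]
    obtain ⟨u, hu⟩ := (hLmem f).mp hf (n - k)
    rw [← hu]
    have hc : (a + (k : ℂ) * 1 + ((n - k : ℤ) : ℂ)) = (a + ((n - k : ℤ) : ℂ)) + (k : ℂ) := by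
      ring
    rw [hc, ρ.key_id hO k lam (a + ((n - k : ℤ) : ℂ)) u]
    have hcc : (a + ((n - k : ℤ) : ℂ)) + (k : ℂ) = a + (n : ℂ) := by push_cast; ring
    rw [hcc]
    exact ⟨_, rfl⟩
  -- PART 2 : L' ≅ L(W, λ, a, 0)
  · have hker0 : ∀ (c : ℂ) (x : W),
        (ρ.d (-1) - c • (LinearMap.id : W →ₗ[ℂ] W)) x = 0 → x = 0 := by
      intro c x hx
      apply ρ.ker_shift hO hnt hs c x
      have h1 : ρ.d (-1) x - c • x = 0 := by simpa using hx
      exact sub_eq_zero.mp h1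
    set T : (ℤ →₀ W) →ₗ[ℂ] (ℤ →₀ W) :=
      Finsupp.lsum ℂ (fun j : ℤ => (Finsupp.lsingle j) ∘ₗ
        (ρ.d (-1) - (a + (j : ℂ)) • (LinearMap.id : W →ₗ[ℂ] W))) with hT
    have hT_apply : ∀ (f : ℤ →₀ W) (n : ℤ),
        T f n = (ρ.d (-1) - (a + (n : ℂ)) • (LinearMap.id : W →ₗ[ℂ] W)) (f n) := by
      intro f n
      rw [hT, Finsupp.lsum_apply]
      exact sum_single_apply'
        (fun j w => (ρ.d (-1) - (a + (j : ℂ)) • (LinearMap.id : W →ₗ[ℂ] W)) w)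
        (fun j => map_zero _) f n
    have hTmem : ∀ f : ℤ →₀ W, T f ∈ ρ.Lprime a := by
      intro f
      rw [hLmem]
      intro n
      rw [hT_apply f n]
      exact ⟨f n, rfl⟩
    have hTinj : Function.Injective T := by
      intro f g hfg
      ext n
      have h1 : T f n = T g n := by rw [hfg]
      rw [hT_apply, hT_apply] at h1
      have h2 : (ρ.d (-1) - (a + (n : ℂ)) • (LinearMap.id : W →ₗ[ℂ] W)) (f n - g n) = 0 := by
        rw [map_sub, h1, sub_self]
      have := hker0 _ _ h2
      exact sub_eq_zero.mp this
    have hTsurj : ∀ g ∈ ρ.Lprime a, ∃ f, T f = g := by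
      intro g hg
      have hchoice : ∀ n : ℤ, ∃ u : W,
          (ρ.d (-1) - (a + (n : ℂ)) • (LinearMap.id : W →ₗ[ℂ] W)) u = g n := fun n =>
        (hLmem g).mp hg n
      refine ⟨g.support.sum (fun n => Finsupp.single n (hchoice n).choose), ?_⟩
      rw [map_sum]
      have hterm : ∀ n ∈ g.support,
          T (Finsupp.single n (hchoice n).choose) = Finsupp.single n (g n) := by
        intro n _
        rw [hT, Finsupp.lsum_single]
        simp only [LinearMap.coe_comp, Function.comp_apply, Finsupp.lsingle_apply]
        rw [(hchoice n).choose_spec]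
      rw [Finset.sum_congr rfl hterm]
      have := Finsupp.sum_single g
      rw [Finsupp.sum] at this
      exact this
    have hbij : Function.Bijective (T.codRestrict (ρ.Lprime a) hTmem) := by
      constructor
      · intro f g h
        apply hTinj
        have := congrArg (Subtype.val) h
        simpa using this
      · rintro ⟨g, hg⟩
        obtain ⟨f, hf⟩ := hTsurj g hg
        exact ⟨f, Subtype.ext (by simpa using hf)⟩
    refine ⟨LinearEquiv.ofBijective (T.codRestrict (ρ.Lprime a) hTmem) hbij, ?_⟩
    intro k f
    have hcoe : ∀ x : ℤ →₀ W,
        ((LinearEquiv.ofBijective (T.codRestrict (ρ.Lprime a) hTmem) hbij x : ℤ →₀ W)) = T x :=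
      fun x => rfl
    rw [hcoe, hcoe]
    -- show T (Lact0 k f) = Lact1 k (T f)
    ext n
    rw [hT_apply, ρ.Lact_apply, ρ.Lact_apply, hT_apply]
    have h0 : a + (k : ℂ) * 0 + ((n - k : ℤ) : ℂ) = a + ((n - k : ℤ) : ℂ) := by ring
    have h1 : a + (k : ℂ) * 1 + ((n - k : ℤ) : ℂ) = (a + ((n - k : ℤ) : ℂ)) + (k : ℂ) := by ring
    have h2 : a + (n : ℂ) = (a + ((n - k : ℤ) : ℂ)) + (k : ℂ) := by push_cast; ring
    rw [h0, h1, h2]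
    exact (ρ.key_id hO k lam (a + ((n - k : ℤ) : ℂ)) (f (n - k))).symm
  -- PART 3 : quotient is N(Soc_(1), a)
  · set π : (ℤ →₀ W) →ₗ[ℂ] (ℤ →₀ ↥ρ.Soc) :=
      Finsupp.lsum ℂ (fun j : ℤ => (Finsupp.lsingle j) ∘ₗ
        ((lam ^ (-j) : ℂ) • (q (a + (j : ℂ))))) with hπ
    have hπ_apply : ∀ (f : ℤ →₀ W) (n : ℤ),
        π f n = (lam ^ (-n) : ℂ) • q (a + (n : ℂ)) (f n) := by
      intro f n
      rw [hπ, Finsupp.lsum_apply]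
      exact sum_single_apply'
        (fun j w => (lam ^ (-j) : ℂ) • q (a + (j : ℂ)) w)
        (fun j => by
          show (lam ^ (-j) : ℂ) • q (a + (j : ℂ)) 0 = 0
          rw [map_zero, smul_zero]) f n
    have hzne : ∀ j : ℤ, (lam ^ j : ℂ) ≠ 0 := fun j => zpow_ne_zero j hlam
    refine ⟨π, ?_, ?_, ?_⟩
    -- surjectivity
    · intro g
      induction g using Finsupp.induction with
      | zero => exact ⟨0, map_zero π⟩
      | single_add n b g hn hb ih =>
        obtain ⟨f, hf⟩ := ih
        refine ⟨Finsupp.single n ((lam ^ (n : ℤ) : ℂ) • (b : W)) + f, ?_⟩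
        rw [map_add, hf]
        congr 1
        ext m
        rw [hπ_apply]
        rcases eq_or_ne m n with h | h
        · subst h
          rw [Finsupp.single_eq_same, Finsupp.single_eq_same, map_smul, hq1, smul_smul,
            ← zpow_add₀ hlam, neg_add_cancel, zpow_zero, one_smul]
        · rw [Finsupp.single_eq_of_ne' (Ne.symm h), Finsupp.single_eq_of_ne' (Ne.symm h),
            map_zero, smul_zero]
    -- kernel
    · ext f
      rw [LinearMap.mem_ker, hLmem]
      constructor
      · intro h n
        have h1 : π f n = 0 := by rw [h]; rfl
        rw [hπ_apply] at h1
        rcases smul_eq_zero.mp h1 with h2 | h2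
        · exact absurd h2 (hzne _)
        · exact (hker _ _).mp h2
      · intro h
        ext n
        rw [hπ_apply, (hker _ _).mpr (h n), smul_zero]
        rfl
    -- intertwining
    · intro k f
      ext n
      rw [hπ_apply, σ.Nact_apply, hπ_apply, ρ.Lact_apply]
      have hcoef : a + (k : ℂ) * 1 + ((n - k : ℤ) : ℂ) = (a + ((n - k : ℤ) : ℂ)) + (k : ℂ) := by
        ring
      have hcoef2 : (k : ℂ) * 1 + a + ((n - k : ℤ) : ℂ) = (a + ((n - k : ℤ) : ℂ)) + (k : ℂ) := by
        ring
      have han : a + (n : ℂ) = (a + ((n - k : ℤ) : ℂ)) + (k : ℂ) := by push_cast; ring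
      rw [hcoef, hcoef2, han]
      set c : ℂ := a + ((n - k : ℤ) : ℂ) with hc
      set w : W := f (n - k) with hwdef
      -- the main identity for q (c+k) (E k w)
      have hEdecomp : ∀ w' : W, q (c + (k : ℂ)) (ρ.E k w')
          = (∑ᶠ i : ℕ, (((k : ℂ) ^ (i + 1)) / (Nat.factorial (i + 1) : ℂ)) • σ.d i (q c w'))
            + (c + (k : ℂ)) • q c w' := by
        intro w'
        obtain ⟨y, hy⟩ := hq3 c w'
        have hwdec : w' = (↑(q c w') : W) + (ρ.d (-1) - c • (LinearMap.id : W →ₗ[ℂ] W)) y := by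
          rw [hy]; abel
        have hu0 : q (c + (k : ℂ)) (ρ.E k ((ρ.d (-1) - c • (LinearMap.id : W →ₗ[ℂ] W)) y))
            = 0 := by
          have h1 : (ρ.d (-1) - c • (LinearMap.id : W →ₗ[ℂ] W)) y = ρ.d (-1) y - c • y := by
            simp
          rw [h1, ρ.E_sub_smul hO k c y, ρ.E_shift hO k y, map_sub, map_sub, map_smul,
            map_smul, hq2 (c + (k : ℂ)) (ρ.E k y)]
          module
        obtain ⟨N, hN⟩ := hO (↑(q c w') : W)
        have hsupp : ∀ i : ℕ, N ≤ i → σ.d i (q c w') = 0 := by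
          intro i hi
          apply Subtype.ext
          rw [hσ]
          exact hN (i : ℤ) (by exact_mod_cast hi)
        have hfin : (∑ᶠ i : ℕ, (((k : ℂ) ^ (i + 1)) / (Nat.factorial (i + 1) : ℂ)) •
            σ.d i (q c w'))
            = ∑ i ∈ Finset.range N, (((k : ℂ) ^ (i + 1)) / (Nat.factorial (i + 1) : ℂ)) •
              σ.d i (q c w') := by
          apply finsum_eq_sum_of_support_subset
          intro i hi
          simp only [Function.mem_support] at hi
          simp only [Finset.coe_range, Set.mem_Iio]
          by_contra hmem
          push_neg at hmem
          exact hi (by rw [hsupp i hmem, smul_zero])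
        have hco : (∑ i ∈ Finset.range N, (((k : ℂ) ^ (i + 1)) /
              (Nat.factorial (i + 1) : ℂ)) • ρ.d (i : ℤ) (↑(q c w') : W))
            = ((∑ i ∈ Finset.range N, (((k : ℂ) ^ (i + 1)) /
              (Nat.factorial (i + 1) : ℂ)) • σ.d i (q c w') : ↥ρ.Soc) : W) := by
          rw [AddSubmonoidClass.coe_finset_sum]
          refine Finset.sum_congr rfl fun i _ => ?_
          rw [SetLike.val_smul, hσ]
        conv_lhs => rw [hwdec]
        rw [ρ.E_add hO k _ _, map_add, hu0, add_zero, ρ.E_split k _ N hN, map_add,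
          hq2 (c + (k : ℂ)), hq1, hco, hq1, hfin, add_comm]
      rw [map_add, map_sub, map_smul, map_smul, hq2 (c + (k : ℂ)), sub_add_cancel, hEdecomp w]
      -- now pull scalars
      obtain ⟨N, hN⟩ := hO (↑(q c w) : W)
      have hsupp : ∀ i : ℕ, N ≤ i → σ.d i (q c w) = 0 := by
        intro i hi
        apply Subtype.ext
        rw [hσ]
        exact hN (i : ℤ) (by exact_mod_cast hi)
      have hfinL : (∑ᶠ i : ℕ, (((k : ℂ) ^ (i + 1)) / (Nat.factorial (i + 1) : ℂ)) •
          σ.d i (q c w))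
          = ∑ i ∈ Finset.range N, (((k : ℂ) ^ (i + 1)) / (Nat.factorial (i + 1) : ℂ)) •
            σ.d i (q c w) := by
        apply finsum_eq_sum_of_support_subset
        intro i hi
        simp only [Function.mem_support] at hi
        simp only [Finset.coe_range, Set.mem_Iio]
        by_contra hmem
        push_neg at hmem
        exact hi (by rw [hsupp i hmem, smul_zero])
      have hfinR : (∑ᶠ i : ℕ, (((k : ℂ) ^ (i + 1)) / (Nat.factorial (i + 1) : ℂ)) •
          σ.d i ((lam ^ (-(n - k)) : ℂ) • q c w))
          = ∑ i ∈ Finset.range N, (lam ^ (-(n - k)) : ℂ) •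
            ((((k : ℂ) ^ (i + 1)) / (Nat.factorial (i + 1) : ℂ)) • σ.d i (q c w)) := by
        rw [finsum_eq_sum_of_support_subset _ (s := Finset.range N) ?_]
        · refine Finset.sum_congr rfl fun i _ => ?_
          rw [map_smul, smul_comm]
        · intro i hi
          simp only [Function.mem_support] at hi
          simp only [Finset.coe_range, Set.mem_Iio]
          by_contra hmem
          push_neg at hmem
          exact hi (by rw [map_smul, hsupp i hmem, smul_zero, smul_zero])
      rw [hfinL, hfinR, ← Finset.smul_sum]
      have hz : (lam ^ (-n) : ℂ) * lam ^ k = (lam ^ (-(n - k)) : ℂ) := by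
        rw [← zpow_add₀ hlam]
        congr 1
        ring
      rw [smul_smul, hz, smul_add]
      congr 1
      rw [smul_comm]
end

section
/- Let λ, a, b ∈ ℂ with λ ≠ 0, 1, and let W be a nontrivial simple 𝔚-module in O_𝔚. Let M be any Virasoro submodule of L(W, λ, a, b). If the subspace M̂ = {v ∈ W : v ⊗ ℂ[t, t⁻¹] ⊆ M} is nonzero, then M = L(W, λ, a, b). -/
open Finset in
/-- Extraction lemma: if `∑ k^i • c i + μ^k • c'' ∈ U` for all integers `k`,
with `μ ≠ 0, 1`, then all coefficients lie in `U`. -/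
lemma key_extract {W : Type*} [AddCommGroup W] [Module ℂ W] (U : Submodule ℂ W)
    (μ : ℂ) (hμ0 : μ ≠ 0) (hμ1 : μ ≠ 1) :
    ∀ N : ℕ, ∀ c : ℕ → W, ∀ c'' : W,
      (∀ k : ℤ, (∑ i ∈ range N, ((k : ℂ) ^ i) • c i) + μ ^ k • c'' ∈ U) →
      (∀ i ∈ range N, c i ∈ U) ∧ c'' ∈ U := by
  intro N
  induction N with
  | zero =>
    intro c c'' hH
    refine ⟨by simp, ?_⟩
    have h0 := hH 0
    simpa using h0
  | succ N IH =>
    intro c c'' hH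
    -- difference sequence coefficients
    set b : ℕ → W := fun j => (∑ i ∈ range (N + 1), ((i.choose j : ℕ) : ℂ) • c i) - c j with hb
    have hbN : b N = 0 := by
      have : ∑ i ∈ range (N + 1), ((i.choose N : ℕ) : ℂ) • c i = c N := by
        rw [Finset.sum_eq_single N]
        · simp
        · intro i hi hiN
          have : i < N := lt_of_le_of_ne (Nat.lt_succ_iff.mp (mem_range.mp hi)) hiN
          simp [Nat.choose_eq_zero_of_lt this]
        · intro h; exact absurd (self_mem_range_succ N) h
      simp [hb, this]
    -- the polynomial identity
    have hpoly : ∀ k : ℤ, (∑ j ∈ range N, ((k : ℂ) ^ j) • b j)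
        = ∑ i ∈ range (N + 1), (((k : ℂ) + 1) ^ i - (k : ℂ) ^ i) • c i := by
      intro k
      have h1 : ∀ i ∈ range (N + 1),
          ((k : ℂ) + 1) ^ i = ∑ j ∈ range (N + 1), ((i.choose j : ℕ) : ℂ) * (k : ℂ) ^ j := by
        intro i hi
        have := add_pow (k : ℂ) 1 i
        simp only [one_pow, mul_one] at this
        rw [this]
        rw [Finset.sum_subset (Finset.range_subset_range.mpr (mem_range.mp hi))]
        · exact Finset.sum_congr rfl (fun j _ => by ring)
        · intro j _ hj
          have : i < j := by
            simp only [mem_range, not_lt] at hj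
            omega
          simp [Nat.choose_eq_zero_of_lt this]
      calc (∑ j ∈ range N, ((k : ℂ) ^ j) • b j)
          = ∑ j ∈ range (N + 1), ((k : ℂ) ^ j) • b j := by
            rw [Finset.sum_range_succ, hbN, smul_zero, add_zero]
        _ = (∑ j ∈ range (N + 1), ∑ i ∈ range (N + 1),
              (((i.choose j : ℕ) : ℂ) * (k : ℂ) ^ j) • c i)
            - ∑ j ∈ range (N + 1), ((k : ℂ) ^ j) • c j := by
            rw [← Finset.sum_sub_distrib]
            refine Finset.sum_congr rfl fun j _ => ?_
            rw [hb]
            simp only [smul_sub, Finset.smul_sum, smul_smul]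
            congr 1
            refine Finset.sum_congr rfl fun i _ => ?_
            rw [mul_comm]
        _ = ∑ i ∈ range (N + 1), (((k : ℂ) + 1) ^ i - (k : ℂ) ^ i) • c i := by
            rw [Finset.sum_comm, ← Finset.sum_sub_distrib]
            refine Finset.sum_congr rfl fun i hi => ?_
            rw [sub_smul, h1 i hi, Finset.sum_smul]
    -- the difference sequence lies in U
    have hΔ : ∀ k : ℤ, (∑ j ∈ range N, ((k : ℂ) ^ j) • b j) + μ ^ k • ((μ - 1) • c'') ∈ U := by
      intro k
      have hsub := U.sub_mem (hH (k + 1)) (hH k)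
      have e1 : (∑ i ∈ range (N + 1), (((k + 1 : ℤ) : ℂ) ^ i) • c i)
          - ∑ i ∈ range (N + 1), ((k : ℂ) ^ i) • c i
          = ∑ j ∈ range N, ((k : ℂ) ^ j) • b j := by
        rw [hpoly k, ← Finset.sum_sub_distrib]
        push_cast
        exact Finset.sum_congr rfl fun i _ => (sub_smul _ _ _).symm
      have e2 : μ ^ (k + 1) • c'' - μ ^ k • c'' = μ ^ k • ((μ - 1) • c'') := by
        rw [zpow_add_one₀ hμ0, smul_smul]
        module
      have heq : ((∑ i ∈ range (N + 1), (((k + 1 : ℤ) : ℂ) ^ i) • c i) + μ ^ (k + 1) • c'')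
          - ((∑ i ∈ range (N + 1), ((k : ℂ) ^ i) • c i) + μ ^ k • c'')
          = (∑ j ∈ range N, ((k : ℂ) ^ j) • b j) + μ ^ k • ((μ - 1) • c'') := by
        rw [← e1, ← e2]; abel
      rw [heq] at hsub
      exact hsub
    obtain ⟨hbU, hc''μ⟩ := IH b ((μ - 1) • c'') hΔ
    have hμ1' : μ - 1 ≠ 0 := sub_ne_zero.mpr hμ1
    have hc'' : c'' ∈ U := by
      have := U.smul_mem (μ - 1)⁻¹ hc''μ
      rwa [smul_smul, inv_mul_cancel₀ hμ1', one_smul] at this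
    -- extract top coefficient
    have hcN : c N ∈ U := by
      rcases Nat.eq_zero_or_pos N with hN | hN
      · subst hN
        have h0 := hH 0
        simp only [range_one, sum_singleton, pow_zero, one_smul, zpow_zero] at h0
        have := U.sub_mem h0 hc''
        simpa using this
      · obtain ⟨N', rfl⟩ := Nat.exists_eq_succ_of_ne_zero hN.ne'
        have hbN' : b N' = ((N' + 1 : ℕ) : ℂ) • c (N' + 1) := by
          rw [hb]
          simp only
          rw [Finset.sum_range_succ, Finset.sum_range_succ]
          rw [Finset.sum_eq_zero, Nat.choose_self, Nat.choose_succ_self_right]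
          · simp
          · intro i hi
            simp [Nat.choose_eq_zero_of_lt (mem_range.mp hi)]
        have hm := hbU N' (self_mem_range_succ N')
        rw [hbN'] at hm
        have := U.smul_mem (((N' + 1 : ℕ) : ℂ))⁻¹ hm
        rwa [smul_smul, inv_mul_cancel₀ (by exact_mod_cast Nat.succ_ne_zero N'), one_smul] at this
    -- reduce
    have hred : ∀ k : ℤ, (∑ i ∈ range N, ((k : ℂ) ^ i) • c i) + μ ^ k • c'' ∈ U := by
      intro k
      have := U.sub_mem (hH k) (U.smul_mem ((k : ℂ) ^ N) hcN)
      have heq : ((∑ i ∈ range (N + 1), ((k : ℂ) ^ i) • c i) + μ ^ k • c'')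
          - ((k : ℂ) ^ N) • c N = (∑ i ∈ range N, ((k : ℂ) ^ i) • c i) + μ ^ k • c'' := by
        rw [Finset.sum_range_succ]; abel
      rwa [heq] at this
    obtain ⟨hrest, _⟩ := IH c c'' hred
    refine ⟨fun i hi => ?_, hc''⟩
    rcases mem_range_succ_iff.mp hi |>.lt_or_eq with h | h
    · exact hrest i (mem_range.mpr h)
    · subst h; exact hcN

section Helpers

variable {W : Type*} [AddCommGroup W] [Module ℂ W]

lemma E_eq_sum (ρ : WittRep W) (k : ℤ) (v : W) (N : ℕ)
    (hN : ∀ i : ℤ, (N : ℤ) ≤ i → ρ.d i v = 0) :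
    ρ.E k v = ∑ i ∈ Finset.range (N + 1),
      (((k : ℂ) ^ i) / (Nat.factorial i : ℂ)) • ρ.d ((i : ℤ) - 1) v := by
  apply finsum_eq_sum_of_support_subset
  intro i hi
  simp only [Function.mem_support, ne_eq] at hi
  by_contra hmem
  apply hi
  have : (N : ℤ) ≤ (i : ℤ) - 1 := by
    simp only [Finset.coe_range, Set.mem_Iio] at hmem
    omega
  rw [hN _ this, smul_zero]

lemma Lact_single (ρ : WittRep W) (lam a b : ℂ) (k j : ℤ) (v : W) :
    ρ.Lact lam a b k (Finsupp.single j v) =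
      Finsupp.single (k + j)
        (lam ^ k • ρ.E k v - ρ.d (-1) v + (a + (k : ℂ) * b + (j : ℂ)) • v) := by
  unfold WittRep.Lact
  rw [Finsupp.sum_single_index]
  have hE : ρ.E k 0 = 0 := by
    unfold WittRep.E
    simp
  rw [hE]
  simp

end Helpers

theorem stmt10 {W : Type*} [AddCommGroup W] [Module ℂ W] (ρ : WittRep W)
    (hO : ρ.InO) (hnt : ¬ ρ.IsTrivial) (hs : ρ.IsSimple)
    (lam a b : ℂ) (hlam0 : lam ≠ 0) (hlam1 : lam ≠ 1)
    (M : Submodule ℂ (ℤ →₀ W)) (hM : ActInvariant (ρ.Lact lam a b) M)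
    (hhat : ∃ v : W, v ≠ 0 ∧ ∀ j : ℤ, Finsupp.single j v ∈ M) :
    M = ⊤ := by
  obtain ⟨v₀, hv₀ne, hv₀⟩ := hhat
  set Uh : Submodule ℂ W :=
    { carrier := {v | ∀ j : ℤ, Finsupp.single j v ∈ M}
      add_mem' := by
        intro u v hu hv j
        rw [Finsupp.single_add]
        exact M.add_mem (hu j) (hv j)
      zero_mem' := by intro j; simp
      smul_mem' := by
        intro t v hv j
        rw [← Finsupp.smul_single]
        exact M.smul_mem t (hv j) } with hUhdef
  have hmem : ∀ v : W, v ∈ Uh ↔ ∀ j : ℤ, Finsupp.single j v ∈ M := fun v => Iff.rfl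
  -- Uh is a 𝔚-submodule
  have hinv : ρ.Invariant Uh := by
    intro i hi v hv
    obtain ⟨N, hN⟩ := hO v
    -- the elements G(k) lie in Uh
    have hG : ∀ k : ℤ, (lam ^ k • ρ.E k v - ρ.d (-1) v) ∈ Uh := by
      intro k
      rw [hmem]
      intro j
      have h1 := hM k _ (hv (j - k))
      rw [Lact_single] at h1
      have hkj : k + (j - k) = j := by ring
      rw [hkj] at h1
      have h2 : Finsupp.single j ((a + (k : ℂ) * b + ((j - k : ℤ) : ℂ)) • v) ∈ M := by
        rw [← Finsupp.smul_single]
        exact M.smul_mem _ (hv j)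
      have h3 := M.sub_mem h1 h2
      rw [← Finsupp.single_sub] at h3
      have heq : (lam ^ k • ρ.E k v - ρ.d (-1) v + (a + (k : ℂ) * b + ((j - k : ℤ) : ℂ)) • v)
          - (a + (k : ℂ) * b + ((j - k : ℤ) : ℂ)) • v
          = lam ^ k • ρ.E k v - ρ.d (-1) v := by abel
      rwa [heq] at h3
    -- apply the extraction lemma
    have hμ0 : (lam⁻¹ : ℂ) ≠ 0 := inv_ne_zero hlam0
    have hμ1 : (lam⁻¹ : ℂ) ≠ 1 := by
      intro h
      exact hlam1 (by rw [← inv_inv lam, h, inv_one])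
    have hkey := key_extract Uh lam⁻¹ hμ0 hμ1 (N + 1)
      (fun n => ((Nat.factorial n : ℂ))⁻¹ • ρ.d ((n : ℤ) - 1) v) (-(ρ.d (-1) v)) ?_
    · -- conclude: d i v ∈ Uh
      obtain ⟨hc, _⟩ := hkey
      by_cases hiN : i < N
      · have hi1 : 0 ≤ i + 1 := by omega
        set n : ℕ := (i + 1).toNat with hn
        have hni : (n : ℤ) = i + 1 := Int.toNat_of_nonneg hi1
        have hnN : n ∈ Finset.range (N + 1) := by
          rw [Finset.mem_range]
          omega
        have := Uh.smul_mem ((Nat.factorial n : ℂ)) (hc n hnN)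
        rw [smul_smul, mul_inv_cancel₀ (by exact_mod_cast (Nat.factorial_ne_zero n)),
          one_smul] at this
        have hni' : (n : ℤ) - 1 = i := by omega
        rwa [hni'] at this
      · rw [hN i (by omega)]
        exact Uh.zero_mem
    · -- verify the hypothesis of the extraction lemma
      intro k
      have hsm := Uh.smul_mem (lam⁻¹ ^ k) (hG k)
      have hlk : lam ^ k ≠ 0 := zpow_ne_zero k hlam0
      have e0 : (lam⁻¹ : ℂ) ^ k = (lam ^ k)⁻¹ := by
        rw [inv_zpow]
      have heq : (lam⁻¹ : ℂ) ^ k • (lam ^ k • ρ.E k v - ρ.d (-1) v)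
          = (∑ n ∈ Finset.range (N + 1), ((k : ℂ) ^ n) •
              (((Nat.factorial n : ℂ))⁻¹ • ρ.d ((n : ℤ) - 1) v))
            + (lam⁻¹ : ℂ) ^ k • (-(ρ.d (-1) v)) := by
        rw [smul_sub, smul_smul, e0, inv_mul_cancel₀ hlk, one_smul,
          E_eq_sum ρ k v N hN, smul_neg]
        rw [sub_eq_add_neg]
        congr 1
        refine Finset.sum_congr rfl fun n _ => ?_
        rw [smul_smul, div_eq_mul_inv]
      rwa [heq] at hsm
  -- simplicity forces Uh = ⊤
  have htop : Uh = ⊤ := by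
    rcases hs.2 Uh hinv with h | h
    · exfalso
      apply hv₀ne
      have : v₀ ∈ Uh := hv₀
      rw [h, Submodule.mem_bot] at this
      exact this
    · exact h
  have hall : ∀ (j : ℤ) (v : W), Finsupp.single j v ∈ M := by
    intro j v
    have : v ∈ Uh := htop ▸ Submodule.mem_top
    exact this j
  rw [eq_top_iff]
  intro f _
  induction f using Finsupp.induction with
  | zero => exact M.zero_mem
  | single_add j v f _ _ ih => exact M.add_mem (hall j v) (ih trivial)
end
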